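/- arXiv:1705.11156 — 4 statements merged into one kernel-verified Lean document; each statement's English description precedes it below -/
import Mathlib

section
/- Let f : ℝ² → ℝ be a non-degenerate weighted homogeneous polynomial of type (d; w₁, w₂) with w₁ ≥ w₂. Then the Łojasiewicz exponent of f satisfies: L(f) = (d − w₁)/w₂ if the zero set of ∂f/∂x₁ (as a germ at the origin) is contained in the line {x₂ = 0}, and L(f) = d/w₂ − 1 otherwise. -/
open MvPolynomial

/-- Euclidean norm of the gradient of a polynomial `f` at `x`. -/
noncomputable def gradNorm {n : ℕ} (f : MvPolynomial (Fin n) ℝ) (x : Fin n → ℝ) : ℝ :=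
  Real.sqrt (∑ i, (eval x (pderiv i f)) ^ 2)

/-- Euclidean norm on `Fin n → ℝ`. -/
noncomputable def eNorm {n : ℕ} (x : Fin n → ℝ) : ℝ :=
  Real.sqrt (∑ i, (x i) ^ 2)

/-- `f` is weighted homogeneous of type `(d; w)`: every monomial `x^α` appearing in `f`
satisfies `∑ i, α i * w i = d`. -/
def IsWeightedHomog {n : ℕ} (f : MvPolynomial (Fin n) ℝ) (w : Fin n → ℕ) (d : ℕ) : Prop :=
  ∀ α ∈ f.support, ∑ i, α i * w i = d

/-- `f` is non-degenerate (isolated singularity at the origin): in some neighborhood of `0`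
the gradient of `f` vanishes only at the origin. -/
def Nondeg {n : ℕ} (f : MvPolynomial (Fin n) ℝ) : Prop :=
  ∃ U ∈ nhds (0 : Fin n → ℝ), ∀ x ∈ U, (∀ i, eval x (pderiv i f) = 0) → x = 0

/-- The Łojasiewicz inequality `‖∇f(x)‖ ≥ C ‖x‖^lam` holds near `0` for some `C > 0`. -/
def LojIneq {n : ℕ} (f : MvPolynomial (Fin n) ℝ) (lam : ℝ) : Prop :=
  ∃ C > (0 : ℝ), ∃ U ∈ nhds (0 : Fin n → ℝ), ∀ x ∈ U, C * eNorm x ^ lam ≤ gradNorm f x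

/-- The Łojasiewicz exponent of `f`: the infimum of all `lam > 0` for which the
Łojasiewicz inequality holds near the origin. -/
noncomputable def lojExp {n : ℕ} (f : MvPolynomial (Fin n) ℝ) : ℝ :=
  sInf {lam : ℝ | 0 < lam ∧ LojIneq f lam}

/-- The weighted "radius" `ρ(x) = (∑ i |x i| ^ (2 / w i)) ^ (1/2)`. -/
noncomputable def rho {n : ℕ} (w : Fin n → ℕ) (x : Fin n → ℝ) : ℝ :=
  Real.sqrt (∑ i, |x i| ^ ((2 : ℝ) / (w i : ℝ)))

/-- The weighted norm of the gradient:
`‖grad_w f(x)‖_w = (∑ i ρ(x)^(2 wᵢ) |∂f/∂xᵢ(x)|²)^(1/2)`. -/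
noncomputable def wGradNorm {n : ℕ} (w : Fin n → ℕ) (f : MvPolynomial (Fin n) ℝ)
    (x : Fin n → ℝ) : ℝ :=
  Real.sqrt (∑ i, rho w x ^ (2 * w i) * (eval x (pderiv i f)) ^ 2)

namespace LojAux
open Finset

noncomputable def scl (w : Fin 2 → ℕ) (t : ℝ) (x : Fin 2 → ℝ) : Fin 2 → ℝ :=
  fun i => t ^ (w i) * x i

variable {w : Fin 2 → ℕ}

lemma eval_scl {g : MvPolynomial (Fin 2) ℝ} {e : ℕ}
    (hg : ∀ α ∈ g.support, ∑ i, α i * w i = e) (t : ℝ) (x : Fin 2 → ℝ) :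
    eval (scl w t x) g = t ^ e * eval x g := by
  rw [eval_eq', eval_eq', Finset.mul_sum]
  refine Finset.sum_congr rfl fun α hα => ?_
  have h1 : ∀ i : Fin 2, (scl w t x i) ^ α i = t ^ (α i * w i) * x i ^ α i := fun i => by
    rw [scl, mul_pow, ← pow_mul, mul_comm (w i)]
  calc coeff α g * ∏ i, scl w t x i ^ α i
      = coeff α g * ∏ i, (t ^ (α i * w i) * x i ^ α i) := by simp_rw [h1]
    _ = t ^ e * (coeff α g * ∏ i, x i ^ α i) := by
        rw [Finset.prod_mul_distrib, Finset.prod_pow_eq_pow_sum, hg α hα]; ring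

lemma support_pderiv_wt {f : MvPolynomial (Fin 2) ℝ} {d : ℕ}
    (hf : ∀ α ∈ f.support, ∑ i, α i * w i = d) (j : Fin 2) :
    ∀ α ∈ (pderiv j f).support, ∑ i, α i * w i + w j = d := by
  classical
  intro α hα
  have h1 : pderiv j f
      = ∑ β ∈ f.support, monomial (β - Finsupp.single j 1) (coeff β f * β j) := by
    conv_lhs => rw [f.as_sum]
    rw [map_sum]
    exact Finset.sum_congr rfl fun β _ => pderiv_monomial
  rw [h1] at hα
  obtain ⟨β, hβ, hmem⟩ := Finset.mem_biUnion.mp (MvPolynomial.support_sum hα)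
  by_cases hbj : β j = 0
  · rw [hbj] at hmem; simp at hmem
  · have hα' : α = β - Finsupp.single j 1 :=
      Finset.mem_singleton.mp (MvPolynomial.support_monomial_subset hmem)
    have hsum := hf β hβ
    have hβα : β = α + Finsupp.single j 1 := by
      rw [hα']
      ext i
      simp only [Finsupp.coe_add, Pi.add_apply, Finsupp.tsub_apply, Finsupp.single_apply]
      rcases eq_or_ne j i with h | h
      · subst h
        rw [if_pos rfl]
        omega
      · simp [h]
    obtain rfl | rfl : j = 0 ∨ j = 1 := by
      rcases j with ⟨jv, hj⟩
      interval_cases jv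
      · exact Or.inl rfl
      · exact Or.inr rfl
    · rw [hβα, Fin.sum_univ_two] at hsum
      rw [Fin.sum_univ_two]
      simp only [Finsupp.add_apply, Finsupp.single_apply, add_mul] at hsum
      norm_num at hsum
      omega
    · rw [hβα, Fin.sum_univ_two] at hsum
      rw [Fin.sum_univ_two]
      simp only [Finsupp.add_apply, Finsupp.single_apply, add_mul] at hsum
      norm_num at hsum
      omega


lemma support_nonempty_wt {f : MvPolynomial (Fin 2) ℝ} {d : ℕ}
    (hf : ∀ α ∈ f.support, ∑ i, α i * w i = d) (j : Fin 2)
    (hP : pderiv j f ≠ 0) : w j ≤ d := by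
  obtain ⟨α, hα⟩ := MvPolynomial.support_nonempty.mpr hP
  have := support_pderiv_wt hf j α hα
  omega

lemma eval_pderiv_scl {f : MvPolynomial (Fin 2) ℝ} {d : ℕ}
    (hf : ∀ α ∈ f.support, ∑ i, α i * w i = d) (j : Fin 2) {t : ℝ} (ht : 0 < t)
    (x : Fin 2 → ℝ) :
    eval (scl w t x) (pderiv j f) = t ^ ((d : ℝ) - w j) * eval x (pderiv j f) := by
  by_cases hP : pderiv j f = 0
  · simp [hP]
  · have hdw : w j ≤ d := support_nonempty_wt hf j hP
    have h2 : ∀ α ∈ (pderiv j f).support, ∑ i, α i * w i = d - w j := by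
      intro α hα
      have := support_pderiv_wt hf j α hα
      omega
    rw [eval_scl h2 t x]
    congr 1
    rw [← Real.rpow_natCast t (d - w j), Nat.cast_sub hdw]

lemma sqrt2_ge_left (a b : ℝ) : |a| ≤ Real.sqrt (a ^ 2 + b ^ 2) := by
  rw [← Real.sqrt_sq_eq_abs]
  exact Real.sqrt_le_sqrt (by nlinarith [sq_nonneg b])

lemma sqrt2_ge_right (a b : ℝ) : |b| ≤ Real.sqrt (a ^ 2 + b ^ 2) := by
  rw [← Real.sqrt_sq_eq_abs]
  exact Real.sqrt_le_sqrt (by nlinarith [sq_nonneg a])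

lemma sqrt2_le (a b : ℝ) : Real.sqrt (a ^ 2 + b ^ 2) ≤ |a| + |b| := by
  rw [show a ^ 2 + b ^ 2 = |a| ^ 2 + |b| ^ 2 by simp [sq_abs]]
  have h := Real.sqrt_le_sqrt (show |a| ^ 2 + |b| ^ 2 ≤ (|a| + |b|) ^ 2 by
    nlinarith [abs_nonneg a, abs_nonneg b])
  rwa [Real.sqrt_sq (by positivity)] at h

lemma gradNorm_eq (f : MvPolynomial (Fin 2) ℝ) (x : Fin 2 → ℝ) :
    gradNorm f x = Real.sqrt ((eval x (pderiv 0 f)) ^ 2 + (eval x (pderiv 1 f)) ^ 2) := by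
  rw [gradNorm, Fin.sum_univ_two]

lemma eNorm_eq (x : Fin 2 → ℝ) : eNorm x = Real.sqrt ((x 0) ^ 2 + (x 1) ^ 2) := by
  rw [eNorm, Fin.sum_univ_two]

lemma gradNorm_nonneg (f : MvPolynomial (Fin 2) ℝ) (x : Fin 2 → ℝ) : 0 ≤ gradNorm f x :=
  Real.sqrt_nonneg _

lemma abs_le_gradNorm (f : MvPolynomial (Fin 2) ℝ) (x : Fin 2 → ℝ) (j : Fin 2) :
    |eval x (pderiv j f)| ≤ gradNorm f x := by
  rw [gradNorm_eq]
  obtain rfl | rfl : j = 0 ∨ j = 1 := by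
    rcases j with ⟨jv, hj⟩
    interval_cases jv
    · exact Or.inl rfl
    · exact Or.inr rfl
  · exact sqrt2_ge_left _ _
  · exact sqrt2_ge_right _ _

lemma gradNorm_le (f : MvPolynomial (Fin 2) ℝ) (x : Fin 2 → ℝ) :
    gradNorm f x ≤ |eval x (pderiv 0 f)| + |eval x (pderiv 1 f)| := by
  rw [gradNorm_eq]; exact sqrt2_le _ _

lemma gradNorm_eq_zero {f : MvPolynomial (Fin 2) ℝ} {x : Fin 2 → ℝ}
    (h : gradNorm f x = 0) (j : Fin 2) : eval x (pderiv j f) = 0 := by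
  have := abs_le_gradNorm f x j
  rw [h] at this
  have := abs_nonneg (eval x (pderiv j f))
  exact abs_eq_zero.mp (le_antisymm (by linarith) (by positivity))

lemma gradNorm_continuous (f : MvPolynomial (Fin 2) ℝ) : Continuous (gradNorm f) := by
  unfold gradNorm
  exact Real.continuous_sqrt.comp (by continuity)

lemma eNorm_nonneg (x : Fin 2 → ℝ) : 0 ≤ eNorm x := Real.sqrt_nonneg _

lemma abs_le_eNorm (x : Fin 2 → ℝ) (j : Fin 2) : |x j| ≤ eNorm x := by
  rw [eNorm_eq]
  obtain rfl | rfl : j = 0 ∨ j = 1 := by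
    rcases j with ⟨jv, hj⟩
    interval_cases jv
    · exact Or.inl rfl
    · exact Or.inr rfl
  · exact sqrt2_ge_left _ _
  · exact sqrt2_ge_right _ _

lemma eNorm_le (x : Fin 2 → ℝ) : eNorm x ≤ |x 0| + |x 1| := by
  rw [eNorm_eq]; exact sqrt2_le _ _

lemma eNorm_pos {x : Fin 2 → ℝ} (hx : x ≠ 0) : 0 < eNorm x := by
  obtain ⟨j, hj⟩ := Function.ne_iff.mp hx
  calc (0:ℝ) < |x j| := abs_pos.mpr hj
    _ ≤ eNorm x := abs_le_eNorm x j


section Rho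
variable (hw : ∀ i, 0 < w i)
include hw

lemma rho_nonneg (x : Fin 2 → ℝ) : 0 ≤ rho w x := Real.sqrt_nonneg _

lemma rho_sq (x : Fin 2 → ℝ) :
    rho w x ^ 2 = |x 0| ^ ((2:ℝ)/(w 0)) + |x 1| ^ ((2:ℝ)/(w 1)) := by
  rw [rho, Fin.sum_univ_two, Real.sq_sqrt (by positivity)]

lemma rho_pos {x : Fin 2 → ℝ} (hx : x ≠ 0) : 0 < rho w x := by
  obtain ⟨j, hj⟩ := Function.ne_iff.mp hx
  have h1 : (0:ℝ) < |x j| ^ ((2:ℝ)/(w j)) := Real.rpow_pos_of_pos (abs_pos.mpr hj) _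
  rw [rho, Fin.sum_univ_two]
  apply Real.sqrt_pos.mpr
  have h2 : (0:ℝ) ≤ |x 0| ^ ((2:ℝ)/(w 0)) := Real.rpow_nonneg (abs_nonneg _) _
  have h3 : (0:ℝ) ≤ |x 1| ^ ((2:ℝ)/(w 1)) := Real.rpow_nonneg (abs_nonneg _) _
  obtain rfl | rfl : j = 0 ∨ j = 1 := by
    rcases j with ⟨jv, hj'⟩
    interval_cases jv
    · exact Or.inl rfl
    · exact Or.inr rfl
  · linarith
  · linarith

lemma rho_zero_iff {x : Fin 2 → ℝ} : rho w x = 0 ↔ x = 0 := by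
  constructor
  · intro h
    by_contra hx
    exact absurd h (ne_of_gt (rho_pos hw hx))
  · intro h
    subst h
    rw [rho]
    have : ∀ i : Fin 2, |(0 : Fin 2 → ℝ) i| ^ ((2:ℝ)/(w i)) = 0 := fun i => by
      rw [Pi.zero_apply, abs_zero, Real.zero_rpow]
      have := hw i
      positivity
    rw [Fin.sum_univ_two, this 0, this 1]
    simp

lemma rho_scl {t : ℝ} (ht : 0 ≤ t) (x : Fin 2 → ℝ) :
    rho w (scl w t x) = t * rho w x := by
  have key : ∀ i : Fin 2, |scl w t x i| ^ ((2:ℝ)/(w i)) = t ^ 2 * |x i| ^ ((2:ℝ)/(w i)) := by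
    intro i
    have hwi : (w i : ℝ) ≠ 0 := Nat.cast_ne_zero.mpr (hw i).ne'
    rw [scl, abs_mul, Real.mul_rpow (abs_nonneg _) (abs_nonneg _)]
    congr 1
    rw [abs_pow, abs_of_nonneg ht, ← Real.rpow_natCast t (w i), ← Real.rpow_mul ht]
    rw [show (w i : ℝ) * ((2:ℝ)/(w i)) = 2 by field_simp, Real.rpow_two]
  rw [rho, rho, Fin.sum_univ_two, Fin.sum_univ_two, key 0, key 1, ← mul_add,
    Real.sqrt_mul (sq_nonneg t), Real.sqrt_sq_eq_abs, abs_of_nonneg ht]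

lemma rho_continuous : Continuous (rho w) := by
  apply Real.continuous_sqrt.comp
  apply continuous_finset_sum
  intro i _
  exact (Real.continuous_rpow_const (by positivity)).comp
    (continuous_abs.comp (continuous_apply i))

lemma abs_le_rho_rpow (x : Fin 2 → ℝ) (i : Fin 2) :
    |x i| ≤ rho w x ^ ((w i : ℝ)) := by
  have hwi : (0:ℝ) < (w i : ℝ) := Nat.cast_pos.mpr (hw i)
  have h1 : |x i| ^ ((2:ℝ)/(w i)) ≤ rho w x ^ (2:ℝ) := by
    rw [Real.rpow_two, rho_sq hw]
    obtain rfl | rfl : i = 0 ∨ i = 1 := by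
      rcases i with ⟨jv, hj'⟩
      interval_cases jv
      · exact Or.inl rfl
      · exact Or.inr rfl
    · have : (0:ℝ) ≤ |x 1| ^ ((2:ℝ)/(w 1)) := Real.rpow_nonneg (abs_nonneg _) _
      linarith
    · have : (0:ℝ) ≤ |x 0| ^ ((2:ℝ)/(w 0)) := Real.rpow_nonneg (abs_nonneg _) _
      linarith
  have h2 := Real.rpow_le_rpow (Real.rpow_nonneg (abs_nonneg _) _) h1
    (le_of_lt (show (0:ℝ) < (w i : ℝ)/2 by positivity))
  rw [← Real.rpow_mul (abs_nonneg _), ← Real.rpow_mul (rho_nonneg hw x)] at h2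
  rw [show (2:ℝ)/(w i) * ((w i)/2) = 1 by field_simp] at h2
  rw [show (2:ℝ) * ((w i)/2) = (w i : ℝ) by ring] at h2
  rwa [Real.rpow_one] at h2

lemma rho_decomp {x : Fin 2 → ℝ} (hx : x ≠ 0) :
    ∃ u : Fin 2 → ℝ, rho w u = 1 ∧ x = scl w (rho w x) u := by
  have ht : 0 < rho w x := rho_pos hw hx
  refine ⟨scl w (rho w x)⁻¹ x, ?_, ?_⟩
  · rw [rho_scl hw (by positivity), inv_mul_cancel₀ ht.ne']
  · funext i
    rw [scl, scl, ← mul_assoc, ← mul_pow, mul_inv_cancel₀ ht.ne', one_pow, one_mul]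

lemma sphere_compact : IsCompact {u : Fin 2 → ℝ | rho w u = 1} := by
  apply IsCompact.of_isClosed_subset (isCompact_closedBall (0 : Fin 2 → ℝ) 1)
  · exact isClosed_eq (rho_continuous hw) continuous_const
  · intro u hu
    simp only [Set.mem_setOf_eq] at hu
    rw [Metric.mem_closedBall, dist_zero_right]
    rw [pi_norm_le_iff_of_nonneg (by norm_num)]
    intro i
    have := abs_le_rho_rpow hw u i
    rw [hu, Real.one_rpow] at this
    simpa using this

lemma sphere_nonempty : ∃ u : Fin 2 → ℝ, rho w u = 1 ∧ u 1 = 0 ∧ u 0 = 1 := by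
  refine ⟨![1, 0], ?_, rfl, rfl⟩
  rw [rho, Fin.sum_univ_two]
  have h0 : |(![1, 0] : Fin 2 → ℝ) 0| ^ ((2:ℝ)/(w 0)) = 1 := by
    norm_num
  have h1 : |(![1, 0] : Fin 2 → ℝ) 1| ^ ((2:ℝ)/(w 1)) = 0 := by
    have hpos : (0:ℝ) < 2/(w 1) := by
      have := hw 1
      positivity
    norm_num [Real.zero_rpow hpos.ne']
  rw [h0, h1]
  simp

end Rho


lemma fin2_cases (j : Fin 2) : j = 0 ∨ j = 1 := by
  rcases j with ⟨jv, hj⟩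
  interval_cases jv
  · exact Or.inl rfl
  · exact Or.inr rfl

lemma scl_mem (hw : ∀ i, 0 < w i) (x : Fin 2 → ℝ) {U : Set (Fin 2 → ℝ)}
    (hU : U ∈ nhds 0) :
    ∃ ε > 0, ∀ t : ℝ, 0 < t → t < ε → scl w t x ∈ U := by
  obtain ⟨δ, hδ, hball⟩ := Metric.mem_nhds_iff.mp hU
  set M : ℝ := |x 0| + |x 1| + 1 with hM
  have hM0 : 0 < M := by positivity
  refine ⟨min 1 (δ / M), by positivity, fun t ht0 htε => ?_⟩
  apply hball
  rw [Metric.mem_ball, dist_zero_right]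
  have ht1 : t ≤ 1 := le_of_lt (lt_of_lt_of_le htε (min_le_left _ _))
  have htδ : t < δ / M := lt_of_lt_of_le htε (min_le_right _ _)
  have hnorm : ‖scl w t x‖ ≤ t * M := by
    rw [pi_norm_le_iff_of_nonneg (by positivity)]
    intro i
    rw [scl, Real.norm_eq_abs, abs_mul, abs_pow, abs_of_nonneg ht0.le]
    have h1 : t ^ (w i) ≤ t := by
      calc t ^ (w i) ≤ t ^ 1 := pow_le_pow_of_le_one ht0.le ht1 (hw i)
        _ = t := pow_one t
    have h2 : |x i| ≤ M := by
      obtain rfl | rfl := fin2_cases i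
      · have := abs_nonneg (x 1); rw [hM]; linarith
      · have := abs_nonneg (x 0); rw [hM]; linarith
    exact mul_le_mul h1 h2 (abs_nonneg _) ht0.le
  have h2 : t * M < δ := by
    have h4 : t * M < δ / M * M := mul_lt_mul_of_pos_right htδ hM0
    rwa [div_mul_cancel₀ _ hM0.ne'] at h4
  linarith

lemma nondeg_cone (hw : ∀ i, 0 < w i) {f : MvPolynomial (Fin 2) ℝ} {d : ℕ}
    (hf : ∀ α ∈ f.support, ∑ i, α i * w i = d) (hnd : Nondeg f)
    {u : Fin 2 → ℝ} (hu : u ≠ 0)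
    (h0 : eval u (pderiv 0 f) = 0) (h1 : eval u (pderiv 1 f) = 0) : False := by
  obtain ⟨U, hU, hND⟩ := hnd
  obtain ⟨ε, hε, hmem⟩ := scl_mem hw u hU
  have hgrad : ∀ i, eval (scl w (ε/2) u) (pderiv i f) = 0 := by
    intro i
    rw [eval_pderiv_scl hf i (by positivity)]
    obtain rfl | rfl := fin2_cases i
    · rw [h0]; ring
    · rw [h1]; ring
  have hx := hND (scl w (ε/2) u) (hmem _ (by positivity) (by linarith)) hgrad
  obtain ⟨j, hj⟩ := Function.ne_iff.mp hu
  have hzj : scl w (ε/2) u j = 0 := by rw [hx]; rfl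
  rw [scl] at hzj
  rcases mul_eq_zero.mp hzj with h | h
  · exact absurd h (pow_ne_zero _ (by positivity))
  · exact hj h

lemma d_ge_w1 (hw : ∀ i, 0 < w i) (hw10 : w 1 ≤ w 0)
    {f : MvPolynomial (Fin 2) ℝ} {d : ℕ}
    (hf : ∀ α ∈ f.support, ∑ i, α i * w i = d) (hnd : Nondeg f) : w 1 ≤ d := by
  obtain ⟨U, hU, hND⟩ := hnd
  obtain ⟨δ, hδ, hball⟩ := Metric.mem_nhds_iff.mp hU
  set x : Fin 2 → ℝ := ![δ/2, 0] with hxdef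
  have hx0 : x ≠ 0 := by
    intro h
    have := congrFun h 0
    rw [hxdef] at this
    norm_num at this
    linarith
  have hxU : x ∈ U := by
    apply hball
    rw [Metric.mem_ball, dist_zero_right]
    have : ‖x‖ ≤ δ/2 := by
      rw [pi_norm_le_iff_of_nonneg (by positivity)]
      intro i
      obtain rfl | rfl := fin2_cases i <;> rw [hxdef] <;> simp [abs_of_nonneg hδ.le] <;> linarith
    linarith
  have hne : ¬ ∀ i, eval x (pderiv i f) = 0 := fun h => hx0 (hND x hxU h)
  push_neg at hne
  obtain ⟨j, hj⟩ := hne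
  have hPne : pderiv j f ≠ 0 := fun h => hj (by rw [h]; simp)
  have hjd := support_nonempty_wt hf j hPne
  obtain rfl | rfl := fin2_cases j
  · omega
  · omega

lemma min_pos_on_sphere (hw : ∀ i, 0 < w i) {φ : (Fin 2 → ℝ) → ℝ} (hφ : Continuous φ)
    (hpos : ∀ u, rho w u = 1 → 0 < φ u) :
    ∃ c > (0:ℝ), ∀ u, rho w u = 1 → c ≤ φ u := by
  obtain ⟨u0, hu0, _, _⟩ := sphere_nonempty hw
  obtain ⟨v, hv, hmin⟩ := (sphere_compact hw).exists_isMinOn ⟨u0, hu0⟩ hφ.continuousOn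
  exact ⟨φ v, hpos v hv, fun u hu => hmin hu⟩

lemma lojExp_eq {f : MvPolynomial (Fin 2) ℝ} (L : ℝ) (hL : 0 ≤ L)
    (hup : ∀ lam : ℝ, L < lam → LojIneq f lam)
    (hlow : ∀ lam : ℝ, 0 < lam → LojIneq f lam → L ≤ lam) :
    lojExp f = L := by
  rw [lojExp]
  apply le_antisymm
  · have h1 : sInf {lam : ℝ | 0 < lam ∧ LojIneq f lam} ≤ sInf (Set.Ioi L) := by
      apply csInf_le_csInf
      · exact ⟨0, fun lam hlam => le_of_lt hlam.1⟩
      · exact Set.nonempty_Ioi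
      · intro lam hlam
        rw [Set.mem_Ioi] at hlam
        exact ⟨lt_of_le_of_lt hL hlam, hup lam hlam⟩
    rwa [csInf_Ioi] at h1
  · apply le_csInf
    · exact ⟨L+1, ⟨by linarith, hup _ (by linarith)⟩⟩
    · rintro lam ⟨ha, hb⟩
      exact hlow lam ha hb

lemma curve_bound (hw : ∀ i, 0 < w i) {f : MvPolynomial (Fin 2) ℝ}
    {u : Fin 2 → ℝ} (hu1 : u 1 ≠ 0) {K m : ℝ} (hK : 0 ≤ K)
    (hcurve : ∀ t : ℝ, 0 < t → t < 1 → gradNorm f (scl w t u) ≤ K * t ^ m)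
    {lam : ℝ} (hlam : 0 < lam) (hLI : LojIneq f lam) : m ≤ (w 1 : ℝ) * lam := by
  obtain ⟨C, hC, U, hU, hineq⟩ := hLI
  obtain ⟨ε, hε, hmem⟩ := scl_mem hw u hU
  set c₁ : ℝ := C * |u 1| ^ lam with hc₁
  have hc₁0 : 0 < c₁ := mul_pos hC (Real.rpow_pos_of_pos (abs_pos.mpr hu1) _)
  by_contra hcon
  push_neg at hcon
  set e : ℝ := m - (w 1:ℝ)*lam with he_def
  have he : 0 < e := by rw [he_def]; linarith
  have key2 : ∀ t:ℝ, 0 < t → t < min ε 1 → c₁ ≤ K * t ^ e := by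
    intro t ht0 htm
    have htε : t < ε := lt_of_lt_of_le htm (min_le_left _ _)
    have ht1 : t < 1 := lt_of_lt_of_le htm (min_le_right _ _)
    have h1 : C * eNorm (scl w t u) ^ lam ≤ gradNorm f (scl w t u) :=
      hineq _ (hmem t ht0 htε)
    have h2 : gradNorm f (scl w t u) ≤ K * t ^ m := hcurve t ht0 ht1
    have h3 : t ^ ((w 1 : ℕ):ℝ) * |u 1| ≤ eNorm (scl w t u) := by
      have h := abs_le_eNorm (scl w t u) 1
      rw [scl, abs_mul, abs_pow, abs_of_nonneg ht0.le] at h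
      rw [Real.rpow_natCast]
      exact h
    have h4 : (t ^ ((w 1:ℕ):ℝ) * |u 1|) ^ lam ≤ eNorm (scl w t u) ^ lam :=
      Real.rpow_le_rpow (by positivity) h3 hlam.le
    rw [Real.mul_rpow (by positivity) (abs_nonneg _), ← Real.rpow_mul ht0.le] at h4
    have key : c₁ * t ^ ((w 1:ℝ) * lam) ≤ K * t ^ m := by
      calc c₁ * t ^ ((w 1:ℝ)*lam) = C * (t ^ ((w 1:ℝ)*lam) * |u 1| ^ lam) := by
            rw [hc₁]; ring
        _ ≤ C * eNorm (scl w t u) ^ lam := by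
            apply mul_le_mul_of_nonneg_left _ hC.le
            exact h4
        _ ≤ gradNorm f (scl w t u) := h1
        _ ≤ K * t ^ m := h2
    have hm : m = (w 1:ℝ)*lam + e := by rw [he_def]; ring
    rw [hm, Real.rpow_add ht0] at key
    have hpow : (0:ℝ) < t ^ ((w 1:ℝ)*lam) := Real.rpow_pos_of_pos ht0 _
    have key' : c₁ * t ^ ((w 1:ℝ)*lam) ≤ (K * t ^ e) * t ^ ((w 1:ℝ)*lam) := by
      calc c₁ * t ^ ((w 1:ℝ)*lam) ≤ K * (t ^ ((w 1:ℝ)*lam) * t ^ e) := key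
        _ = (K * t ^ e) * t ^ ((w 1:ℝ)*lam) := by ring
    exact le_of_mul_le_mul_right key' hpow
  rcases eq_or_lt_of_le hK with hK0 | hK0
  · have := key2 (min ε 1 / 2) (by positivity) (by
      have : (0:ℝ) < min ε 1 := by positivity
      linarith)
    rw [← hK0] at this
    simp at this
    linarith
  · set B : ℝ := c₁ / K with hB
    have hB0 : 0 < B := by positivity
    set s : ℝ := B ^ (1/e) with hs
    have hs0 : 0 < s := Real.rpow_pos_of_pos hB0 _
    set t₀ : ℝ := min (min ε 1 / 2) (s / 2) with ht₀def
    have ht₀0 : 0 < t₀ := by positivity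
    have ht₀m : t₀ < min ε 1 := by
      have h1 : t₀ ≤ min ε 1 / 2 := min_le_left _ _
      have : (0:ℝ) < min ε 1 := by positivity
      linarith
    have ht₀s : t₀ < s := by
      have h1 : t₀ ≤ s / 2 := min_le_right _ _
      linarith
    have hpow : t₀ ^ e < B := by
      have h1 : t₀ ^ e < s ^ e := Real.rpow_lt_rpow ht₀0.le ht₀s he
      have h2 : s ^ e = B := by
        rw [hs, ← Real.rpow_mul hB0.le]
        rw [show (1/e) * e = 1 by field_simp]
        exact Real.rpow_one B
      linarith
    have := key2 t₀ ht₀0 ht₀m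
    have : c₁ < c₁ := by
      calc c₁ ≤ K * t₀ ^ e := this
        _ < K * B := by apply mul_lt_mul_of_pos_left hpow hK0
        _ = c₁ := by rw [hB]; field_simp
    linarith


lemma sphere_abs_le (hw : ∀ i, 0 < w i) {u : Fin 2 → ℝ} (hu : rho w u = 1) (i : Fin 2) :
    |u i| ≤ 1 := by
  have := abs_le_rho_rpow hw u i
  rwa [hu, Real.one_rpow] at this

lemma gradNorm_pos_on_sphere (hw : ∀ i, 0 < w i) {f : MvPolynomial (Fin 2) ℝ} {d : ℕ}
    (hf : ∀ α ∈ f.support, ∑ i, α i * w i = d) (hnd : Nondeg f)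
    {u : Fin 2 → ℝ} (hu : rho w u = 1) : 0 < gradNorm f u := by
  rcases lt_or_eq_of_le (gradNorm_nonneg f u) with h | h
  · exact h
  · exfalso
    have hu0 : u ≠ 0 := by
      intro h0
      rw [h0, (rho_zero_iff hw).mpr rfl] at hu
      norm_num at hu
    exact nondeg_cone hw hf hnd hu0 (gradNorm_eq_zero h.symm 0) (gradNorm_eq_zero h.symm 1)

lemma grad_lower (hw : ∀ i, 0 < w i) (hw10 : w 1 ≤ w 0)
    {f : MvPolynomial (Fin 2) ℝ} {d : ℕ}
    (hf : ∀ α ∈ f.support, ∑ i, α i * w i = d)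
    {t : ℝ} (ht0 : 0 < t) (ht1 : t ≤ 1) {u : Fin 2 → ℝ} :
    t ^ ((d:ℝ) - w 1) * gradNorm f u ≤ gradNorm f (scl w t u) := by
  have gA := eval_pderiv_scl hf 0 ht0 u
  have gB := eval_pderiv_scl hf 1 ht0 u
  have hee : (d:ℝ) - w 0 ≤ (d:ℝ) - w 1 := by
    have : (w 1 : ℝ) ≤ (w 0 : ℝ) := Nat.cast_le.mpr hw10
    linarith
  have hle : t ^ ((d:ℝ) - w 1) ≤ t ^ ((d:ℝ) - w 0) :=
    Real.rpow_le_rpow_of_exponent_ge ht0 ht1 hee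
  have hp1 : (0:ℝ) < t ^ ((d:ℝ) - w 1) := Real.rpow_pos_of_pos ht0 _
  rw [gradNorm_eq, gradNorm_eq, gA, gB]
  have h1 : (t ^ ((d:ℝ) - w 1)) ^ 2 *
      ((eval u (pderiv 0 f)) ^ 2 + (eval u (pderiv 1 f)) ^ 2) ≤
      (t ^ ((d:ℝ) - w 0) * eval u (pderiv 0 f)) ^ 2
        + (t ^ ((d:ℝ) - w 1) * eval u (pderiv 1 f)) ^ 2 := by
    have h2 : (t ^ ((d:ℝ) - w 1)) ^ 2 ≤ (t ^ ((d:ℝ) - w 0)) ^ 2 := by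
      apply pow_le_pow_left₀ hp1.le hle
    nlinarith [sq_nonneg (eval u (pderiv 0 f)), sq_nonneg (eval u (pderiv 1 f))]
  have h3 := Real.sqrt_le_sqrt h1
  rw [Real.sqrt_mul (sq_nonneg _), Real.sqrt_sq hp1.le] at h3
  exact h3

lemma norm_upper (hw : ∀ i, 0 < w i) (hw10 : w 1 ≤ w 0)
    {t : ℝ} (ht0 : 0 < t) (ht1 : t ≤ 1) {u : Fin 2 → ℝ} (hu : rho w u = 1) :
    eNorm (scl w t u) ≤ 2 * t ^ ((w 1 : ℕ) : ℝ) := by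
  have key : ∀ i : Fin 2, |scl w t u i| ≤ t ^ ((w 1 : ℕ) : ℝ) := by
    intro i
    have h1 : |scl w t u i| = t ^ (w i) * |u i| := by
      rw [scl, abs_mul, abs_pow, abs_of_nonneg ht0.le]
    have h2 : t ^ (w i) * |u i| ≤ t ^ (w i) := by
      have := sphere_abs_le hw hu i
      nlinarith [pow_pos ht0 (w i)]
    have h3 : t ^ (w i) ≤ t ^ ((w 1 : ℕ) : ℝ) := by
      rw [← Real.rpow_natCast t (w i)]
      apply Real.rpow_le_rpow_of_exponent_ge ht0 ht1
      have h4 : w 1 ≤ w i := by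
        obtain rfl | rfl := fin2_cases i
        · exact hw10
        · exact le_refl _
      exact_mod_cast h4
    rw [h1]
    exact h2.trans h3
  calc eNorm (scl w t u) ≤ |scl w t u 0| + |scl w t u 1| := eNorm_le _
    _ ≤ t ^ ((w 1:ℕ):ℝ) + t ^ ((w 1:ℕ):ℝ) := add_le_add (key 0) (key 1)
    _ = 2 * t ^ ((w 1:ℕ):ℝ) := by ring

lemma up2 (hw : ∀ i, 0 < w i) (hw10 : w 1 ≤ w 0)
    {f : MvPolynomial (Fin 2) ℝ} {d : ℕ}
    (hf : ∀ α ∈ f.support, ∑ i, α i * w i = d) (hnd : Nondeg f)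
    {lam : ℝ} (hlam : 0 < lam) (hge : (d:ℝ)/(w 1) - 1 ≤ lam) : LojIneq f lam := by
  have hw1R : (0:ℝ) < (w 1 : ℝ) := Nat.cast_pos.mpr (hw 1)
  have hdw1 : w 1 ≤ d := d_ge_w1 hw hw10 hf hnd
  set L2 : ℝ := (d:ℝ)/(w 1) - 1 with hL2
  have hL20 : 0 ≤ L2 := by
    rw [hL2, sub_nonneg, le_div_iff₀ hw1R, one_mul]
    exact_mod_cast hdw1
  obtain ⟨m, hm0, hmin⟩ := min_pos_on_sphere hw (gradNorm_continuous f)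
    (fun u hu => gradNorm_pos_on_sphere hw hf hnd hu)
  have h2L : (0:ℝ) < 2 ^ L2 := Real.rpow_pos_of_pos (by norm_num) _
  refine ⟨m / 2 ^ L2, by positivity, {x | rho w x < 1/2}, ?_, ?_⟩
  · exact (isOpen_lt (rho_continuous hw) continuous_const).mem_nhds
      (by simp [Set.mem_setOf_eq, (rho_zero_iff hw).mpr rfl])
  · intro x hx
    rw [Set.mem_setOf_eq] at hx
    by_cases hx0 : x = 0
    · subst hx0
      have he : eNorm (0 : Fin 2 → ℝ) = 0 := by
        rw [eNorm_eq]; norm_num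
      rw [he, Real.zero_rpow hlam.ne', mul_zero]
      exact gradNorm_nonneg f 0
    · obtain ⟨u, hu1, hxu⟩ := rho_decomp hw hx0
      set t : ℝ := rho w x with htdef
      have ht0 : 0 < t := rho_pos hw hx0
      have ht1 : t ≤ 1 := by rw [htdef]; linarith
      have hnu : eNorm x ≤ 2 * t ^ ((w 1:ℕ):ℝ) := by
        rw [hxu]; exact norm_upper hw hw10 ht0 ht1 hu1
      have hnu1 : eNorm x ≤ 1 := by
        have h1 : t ^ ((w 1:ℕ):ℝ) ≤ t := by
          have h2 : t ^ ((w 1:ℕ):ℝ) ≤ t ^ ((1:ℕ):ℝ) := by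
            apply Real.rpow_le_rpow_of_exponent_ge ht0 ht1
            exact_mod_cast hw 1
          rwa [Nat.cast_one, Real.rpow_one] at h2
        have h3 : t ≤ 1/2 := le_of_lt hx
        linarith
      have hmono : eNorm x ^ lam ≤ eNorm x ^ L2 :=
        Real.rpow_le_rpow_of_exponent_ge (eNorm_pos hx0) hnu1 hge
      have hb : eNorm x ^ L2 ≤ 2 ^ L2 * t ^ ((d:ℝ) - w 1) := by
        have h1 : eNorm x ^ L2 ≤ (2 * t ^ ((w 1:ℕ):ℝ)) ^ L2 :=
          Real.rpow_le_rpow (eNorm_nonneg x) hnu hL20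
        rw [Real.mul_rpow (by norm_num) (by positivity)] at h1
        have h2 : (t ^ ((w 1:ℕ):ℝ)) ^ L2 = t ^ ((d:ℝ) - w 1) := by
          rw [← Real.rpow_mul ht0.le]
          congr 1
          rw [hL2]
          field_simp
        rwa [h2] at h1
      have hg : t ^ ((d:ℝ) - w 1) * m ≤ gradNorm f x := by
        have := grad_lower hw hw10 hf ht0 ht1 (u := u)
        rw [← hxu] at this
        have hmu : m ≤ gradNorm f u := hmin u hu1
        have hp1 : (0:ℝ) < t ^ ((d:ℝ) - w 1) := Real.rpow_pos_of_pos ht0 _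
        nlinarith
      calc m / 2 ^ L2 * eNorm x ^ lam ≤ m / 2 ^ L2 * (2 ^ L2 * t ^ ((d:ℝ) - w 1)) := by
            apply mul_le_mul_of_nonneg_left _ (by positivity)
            exact hmono.trans hb
        _ = t ^ ((d:ℝ) - w 1) * m := by field_simp
        _ ≤ gradNorm f x := hg

lemma low2 (hw : ∀ i, 0 < w i) {f : MvPolynomial (Fin 2) ℝ} {d : ℕ}
    (hf : ∀ α ∈ f.support, ∑ i, α i * w i = d)
    (hnB : ¬ ∃ U ∈ nhds (0 : Fin 2 → ℝ), ∀ x ∈ U, eval x (pderiv 0 f) = 0 → x 1 = 0)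
    {lam : ℝ} (hlam : 0 < lam) (hLI : LojIneq f lam) : (d:ℝ)/(w 1) - 1 ≤ lam := by
  have hw1R : (0:ℝ) < (w 1 : ℝ) := Nat.cast_pos.mpr (hw 1)
  push_neg at hnB
  obtain ⟨u, -, hP0, hu1⟩ := hnB Set.univ Filter.univ_mem
  have hcurve : ∀ t : ℝ, 0 < t → t < 1 →
      gradNorm f (scl w t u) ≤ |eval u (pderiv 1 f)| * t ^ ((d:ℝ) - w 1) := by
    intro t ht0 ht1
    have gA := eval_pderiv_scl hf 0 ht0 u
    have gB := eval_pderiv_scl hf 1 ht0 u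
    rw [hP0, mul_zero] at gA
    calc gradNorm f (scl w t u)
        ≤ |eval (scl w t u) (pderiv 0 f)| + |eval (scl w t u) (pderiv 1 f)| := gradNorm_le f _
      _ = |eval u (pderiv 1 f)| * t ^ ((d:ℝ) - w 1) := by
          rw [gA, gB, abs_zero, abs_mul, zero_add]
          rw [abs_of_nonneg (Real.rpow_pos_of_pos ht0 _).le]
          ring
  have := curve_bound hw hu1 (abs_nonneg _) hcurve hlam hLI
  rw [sub_le_iff_le_add, div_le_iff₀ hw1R]
  linarith

lemma branch2 (hw : ∀ i, 0 < w i) (hw10 : w 1 ≤ w 0)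
    {f : MvPolynomial (Fin 2) ℝ} {d : ℕ}
    (hf : ∀ α ∈ f.support, ∑ i, α i * w i = d) (hnd : Nondeg f)
    (hnB : ¬ ∃ U ∈ nhds (0 : Fin 2 → ℝ), ∀ x ∈ U, eval x (pderiv 0 f) = 0 → x 1 = 0) :
    lojExp f = (d:ℝ)/(w 1) - 1 := by
  have hw1R : (0:ℝ) < (w 1 : ℝ) := Nat.cast_pos.mpr (hw 1)
  have hdw1 : w 1 ≤ d := d_ge_w1 hw hw10 hf hnd
  have hL0 : (0:ℝ) ≤ (d:ℝ)/(w 1) - 1 := by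
    rw [sub_nonneg, le_div_iff₀ hw1R, one_mul]
    exact_mod_cast hdw1
  apply lojExp_eq _ hL0
  · intro lam hlt
    exact up2 hw hw10 hf hnd (lt_of_le_of_lt hL0 hlt) (le_of_lt hlt)
  · intro lam hlam hLI
    exact low2 hw hf hnB hlam hLI


lemma eval_monomial' (u : Fin 2 → ℝ) (s : Fin 2 →₀ ℕ) (c : ℝ) :
    eval u (monomial s c) = c * ∏ i, u i ^ s i := by
  rw [eval_monomial]
  congr 1
  exact Finsupp.prod_fintype _ _ (fun i => pow_zero _)

lemma b1_global (hw : ∀ i, 0 < w i) {f : MvPolynomial (Fin 2) ℝ} {d : ℕ}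
    (hf : ∀ α ∈ f.support, ∑ i, α i * w i = d)
    (hB : ∃ U ∈ nhds (0 : Fin 2 → ℝ), ∀ x ∈ U, eval x (pderiv 0 f) = 0 → x 1 = 0) :
    ∀ x : Fin 2 → ℝ, eval x (pderiv 0 f) = 0 → x 1 = 0 := by
  obtain ⟨U, hU, hP⟩ := hB
  intro x hx
  by_contra hx1
  obtain ⟨ε, hε, hmem⟩ := scl_mem hw x hU
  have h1 : eval (scl w (ε/2) x) (pderiv 0 f) = 0 := by
    rw [eval_pderiv_scl hf 0 (by positivity), hx, mul_zero]
  have h2 := hP _ (hmem (ε/2) (by positivity) (by linarith)) h1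
  have h3 : (ε/2) ^ (w 1) * x 1 = 0 := h2
  rcases mul_eq_zero.mp h3 with h | h
  · exact absurd h (pow_ne_zero _ (by positivity))
  · exact hx1 h

lemma exists_pure {g : MvPolynomial (Fin 2) ℝ} {u : Fin 2 → ℝ} (hu1 : u 1 = 0)
    (hne : eval u g ≠ 0) : ∃ β ∈ g.support, β 1 = 0 := by
  by_contra hcon
  push_neg at hcon
  apply hne
  rw [eval_eq']
  apply Finset.sum_eq_zero
  intro β hβ
  have h1 : ∏ i, u i ^ β i = 0 := by
    rw [Fin.prod_univ_two, hu1, zero_pow (hcon β hβ), mul_zero]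
  rw [h1, mul_zero]

lemma d_big (hw : ∀ i, 0 < w i) (hw10 : w 1 ≤ w 0)
    {f : MvPolynomial (Fin 2) ℝ} {d : ℕ}
    (hf : ∀ α ∈ f.support, ∑ i, α i * w i = d) (hnd : Nondeg f)
    {u : Fin 2 → ℝ} (hu : rho w u = 1) (hu1 : u 1 = 0)
    (hPu : eval u (pderiv 0 f) = 0) (hPne : pderiv 0 f ≠ 0) :
    w 0 + w 1 ≤ d := by
  have hu0 : u ≠ 0 := by
    intro h
    rw [h, (rho_zero_iff hw).mpr rfl] at hu
    norm_num at hu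
  have hQu : eval u (pderiv 1 f) ≠ 0 := fun h => nondeg_cone hw hf hnd hu0 hPu h
  obtain ⟨β, hβ, hβ1⟩ := exists_pure hu1 hQu
  have hdeg := support_pderiv_wt hf 1 β hβ
  rw [Fin.sum_univ_two, hβ1, zero_mul, add_zero] at hdeg
  by_cases hβ0 : β 0 = 0
  · exfalso
    rw [hβ0, zero_mul, zero_add] at hdeg
    -- d = w 1 ; derive contradiction with P(u) = 0
    obtain ⟨α₀, hα₀⟩ := MvPolynomial.support_nonempty.mpr hPne
    have hzero : ∀ α ∈ (pderiv 0 f).support, α = 0 := by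
      intro α hα
      have h2 := support_pderiv_wt hf 0 α hα
      rw [Fin.sum_univ_two] at h2
      have h3 : α 0 * w 0 = 0 ∧ α 1 * w 1 = 0 := by omega
      apply Finsupp.ext
      intro i
      obtain rfl | rfl := fin2_cases i
      · rcases Nat.mul_eq_zero.mp h3.1 with h | h
        · exact h
        · exact absurd h (hw 0).ne'
      · rcases Nat.mul_eq_zero.mp h3.2 with h | h
        · exact h
        · exact absurd h (hw 1).ne'
    have hα₀0 := hzero α₀ hα₀
    have hev : eval u (pderiv 0 f) = coeff α₀ (pderiv 0 f) := by
      rw [eval_eq']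
      rw [Finset.sum_eq_single_of_mem α₀ hα₀]
      · rw [hα₀0]
        simp
      · intro b hb hbne
        exact absurd ((hzero b hb).trans hα₀0.symm) hbne
    rw [hPu] at hev
    exact (mem_support_iff.mp hα₀) hev.symm
  · have h1 : 1 ≤ β 0 := Nat.pos_of_ne_zero hβ0
    have h2 : w 0 ≤ β 0 * w 0 := Nat.le_mul_of_pos_left _ h1
    omega

lemma claimA (hw : ∀ i, 0 < w i) {f : MvPolynomial (Fin 2) ℝ} {d : ℕ}
    (hf : ∀ α ∈ f.support, ∑ i, α i * w i = d)
    (hglob : ∀ x : Fin 2 → ℝ, eval x (pderiv 0 f) = 0 → x 1 = 0)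
    (hPne : pderiv 0 f ≠ 0) :
    ∃ c > (0:ℝ), ∀ u, rho w u = 1 →
      c * |u 1| ^ (((d:ℝ) - w 0)/(w 1)) ≤ |eval u (pderiv 0 f)| := by
  classical
  have hsupp : ∀ α ∈ (pderiv 0 f).support, ∑ i, α i * w i + w 0 = d :=
    support_pderiv_wt hf 0
  have hsne : (pderiv 0 f).support.Nonempty := MvPolynomial.support_nonempty.mpr hPne
  have hAne : ((pderiv 0 f).support.image (fun α => α 1)).Nonempty := hsne.image _
  set a : ℕ := ((pderiv 0 f).support.image (fun α => α 1)).min' hAne with ha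
  obtain ⟨αs, hαs, hαs1⟩ : ∃ α ∈ (pderiv 0 f).support, α 1 = a := by
    have h := Finset.min'_mem _ hAne
    rw [← ha] at h
    obtain ⟨α, hα, hval⟩ := Finset.mem_image.mp h
    exact ⟨α, hα, hval⟩
  have hale : ∀ α ∈ (pderiv 0 f).support, a ≤ α 1 := fun α hα =>
    Finset.min'_le _ _ (Finset.mem_image_of_mem _ hα)
  set R : MvPolynomial (Fin 2) ℝ :=
    ∑ α ∈ (pderiv 0 f).support, monomial (α - Finsupp.single 1 a) (coeff α (pderiv 0 f))
    with hR
  have hfact : pderiv 0 f = X 1 ^ a * R := by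
    rw [hR, Finset.mul_sum]
    conv_lhs => rw [(pderiv 0 f).as_sum]
    refine Finset.sum_congr rfl fun α hα => ?_
    rw [X_pow_eq_monomial, monomial_mul, one_mul,
      add_tsub_cancel_of_le (Finsupp.single_le_iff.mpr (hale α hα))]
  have heval : ∀ u : Fin 2 → ℝ, eval u (pderiv 0 f) = u 1 ^ a * eval u R := by
    intro u
    conv_lhs => rw [hfact]
    rw [map_mul, map_pow, eval_X]
  have hcont : Continuous fun u : Fin 2 → ℝ => |eval u R| :=
    continuous_abs.comp (MvPolynomial.continuous_eval R)
  have hRpos : ∀ u, rho w u = 1 → 0 < |eval u R| := by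
    intro u hu
    rw [abs_pos]
    by_cases hu1 : u 1 = 0
    · have hu0 : u 0 ≠ 0 := by
        intro h0
        have hz : u = 0 := by
          funext i
          obtain rfl | rfl := fin2_cases i
          · exact h0
          · exact hu1
        rw [hz, (rho_zero_iff hw).mpr rfl] at hu
        norm_num at hu
      have hun : eval u R = coeff αs (pderiv 0 f) * u 0 ^ (αs 0) := by
        rw [hR, map_sum]
        rw [Finset.sum_eq_single_of_mem αs hαs]
        · rw [eval_monomial']
          congr 1
          rw [Fin.prod_univ_two, Finsupp.tsub_apply, Finsupp.tsub_apply,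
            Finsupp.single_apply, Finsupp.single_apply,
            if_neg (by decide : ¬(1:Fin 2) = 0), if_pos rfl, hαs1]
          simp
        · intro β hβ hβne
          rw [eval_monomial']
          have hb1 : a < β 1 := by
            rcases lt_or_eq_of_le (hale β hβ) with h | h
            · exact h
            · exfalso
              apply hβne
              have hdg1 := hsupp β hβ
              have hdg2 := hsupp αs hαs
              rw [Fin.sum_univ_two] at hdg1 hdg2
              have hβ1a : β 1 = a := h.symm
              have hβ0 : β 0 = αs 0 := by
                have hmul : β 0 * w 0 = αs 0 * w 0 := by
                  rw [hβ1a] at hdg1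
                  rw [hαs1] at hdg2
                  omega
                exact Nat.eq_of_mul_eq_mul_right (hw 0) hmul
              apply Finsupp.ext
              intro i
              obtain rfl | rfl := fin2_cases i
              · exact hβ0
              · rw [hβ1a, hαs1]
          rw [Fin.prod_univ_two, Finsupp.tsub_apply, Finsupp.tsub_apply,
            Finsupp.single_apply, Finsupp.single_apply,
            if_neg (by decide : ¬(1:Fin 2) = 0), if_pos rfl, hu1,
            zero_pow (by omega : β 1 - a ≠ 0), mul_zero, mul_zero]
      rw [hun]
      exact mul_ne_zero (mem_support_iff.mp hαs) (pow_ne_zero _ hu0)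
    · have hPu : eval u (pderiv 0 f) ≠ 0 := fun h => hu1 (hglob u h)
      intro hRu
      apply hPu
      rw [heval u, hRu, mul_zero]
  obtain ⟨c, hc0, hcmin⟩ := min_pos_on_sphere hw hcont hRpos
  refine ⟨c, hc0, fun u hu => ?_⟩
  have h1 : |eval u (pderiv 0 f)| = |u 1| ^ a * |eval u R| := by
    rw [heval u, abs_mul, abs_pow]
  have hb0 : (0:ℝ) ≤ |u 1| := abs_nonneg _
  have hb1 : |u 1| ≤ 1 := sphere_abs_le hw hu 1
  have haL : ((a:ℕ):ℝ) ≤ ((d:ℝ) - w 0)/(w 1) := by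
    have hdg := hsupp αs hαs
    rw [Fin.sum_univ_two, hαs1] at hdg
    have h5 : a * w 1 + w 0 ≤ d := by omega
    rw [le_div_iff₀ (by exact_mod_cast hw 1)]
    have h4 : (a:ℝ) * (w 1:ℝ) + (w 0:ℝ) ≤ (d:ℝ) := by exact_mod_cast h5
    linarith
  have h3 : |u 1| ^ (((d:ℝ) - w 0)/(w 1)) ≤ |u 1| ^ ((a:ℕ):ℝ) :=
    Real.rpow_le_rpow_of_exponent_ge' hb0 hb1 (by positivity) haL
  rw [Real.rpow_natCast] at h3
  calc c * |u 1| ^ (((d:ℝ) - w 0)/(w 1)) ≤ c * |u 1| ^ a :=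
        mul_le_mul_of_nonneg_left h3 hc0.le
    _ ≤ |u 1| ^ a * |eval u R| := by
        have := hcmin u hu
        nlinarith [pow_nonneg hb0 a]
    _ = |eval u (pderiv 0 f)| := h1.symm


lemma claimB (hw : ∀ i, 0 < w i) (hw10 : w 1 ≤ w 0)
    {f : MvPolynomial (Fin 2) ℝ} {d : ℕ}
    (hf : ∀ α ∈ f.support, ∑ i, α i * w i = d) (hnd : Nondeg f)
    (hglob : ∀ x : Fin 2 → ℝ, eval x (pderiv 0 f) = 0 → x 1 = 0)
    (hPne : pderiv 0 f ≠ 0) :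
    ∃ c > (0:ℝ), ∀ u, rho w u = 1 → ∀ t : ℝ, 0 < t → t ≤ 1 →
      c * t ^ ((w 0:ℝ) * (((d:ℝ) - w 0)/(w 1))) ≤
        max (t ^ ((d:ℝ) - w 0) * |eval u (pderiv 0 f)|)
            (t ^ ((d:ℝ) - w 1) * |eval u (pderiv 1 f)|) := by
  have hdw0 : w 0 ≤ d := support_nonempty_wt hf 0 hPne
  have hw1R : (0:ℝ) < (w 1:ℝ) := Nat.cast_pos.mpr (hw 1)
  have hw0R : (0:ℝ) < (w 0:ℝ) := Nat.cast_pos.mpr (hw 0)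
  have hw10R : (w 1:ℝ) ≤ (w 0:ℝ) := Nat.cast_le.mpr hw10
  have hdw0R : (w 0:ℝ) ≤ (d:ℝ) := Nat.cast_le.mpr hdw0
  set L1 : ℝ := ((d:ℝ) - w 0)/(w 1) with hL1
  have hexp0 : (d:ℝ) - w 0 ≤ (w 0:ℝ) * L1 := by
    rw [hL1, ← mul_div_assoc, le_div_iff₀ hw1R]
    nlinarith [mul_nonneg (sub_nonneg.mpr hw10R) (sub_nonneg.mpr hdw0R)]
  have hcomp0 : ∀ t : ℝ, 0 < t → t ≤ 1 →
      t ^ ((w 0:ℝ) * L1) ≤ t ^ ((d:ℝ) - w 0) := fun t ht0 ht1 =>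
    Real.rpow_le_rpow_of_exponent_ge ht0 ht1 hexp0
  by_cases hz : ∃ u, rho w u = 1 ∧ eval u (pderiv 0 f) = 0
  · obtain ⟨us, hus, hPus⟩ := hz
    have hd2 : w 0 + w 1 ≤ d :=
      d_big hw hw10 hf hnd hus (hglob us hPus) hPus hPne
    have hd2R : (w 0:ℝ) + (w 1:ℝ) ≤ (d:ℝ) := by exact_mod_cast hd2
    have hexp1 : (d:ℝ) - w 1 ≤ (w 0:ℝ) * L1 := by
      rw [hL1, ← mul_div_assoc, le_div_iff₀ hw1R]
      nlinarith [mul_nonneg (sub_nonneg.mpr hw10R)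
        (by linarith : (0:ℝ) ≤ (d:ℝ) - w 0 - w 1)]
    have hcomp1 : ∀ t : ℝ, 0 < t → t ≤ 1 →
        t ^ ((w 0:ℝ) * L1) ≤ t ^ ((d:ℝ) - w 1) := fun t ht0 ht1 =>
      Real.rpow_le_rpow_of_exponent_ge ht0 ht1 hexp1
    obtain ⟨c, hc0, hcmin⟩ := min_pos_on_sphere hw
      (Continuous.max
        (continuous_abs.comp (MvPolynomial.continuous_eval (pderiv 0 f)))
        (continuous_abs.comp (MvPolynomial.continuous_eval (pderiv 1 f))))
      (fun u hu => by
        have := gradNorm_pos_on_sphere hw hf hnd hu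
        rcases eq_or_ne (eval u (pderiv 0 f)) 0 with h0 | h0
        · rcases eq_or_ne (eval u (pderiv 1 f)) 0 with h1 | h1
          · exfalso
            rw [gradNorm_eq, h0, h1] at this
            norm_num at this
          · exact lt_max_of_lt_right (abs_pos.mpr h1)
        · exact lt_max_of_lt_left (abs_pos.mpr h0))
    refine ⟨c, hc0, fun u hu t ht0 ht1 => ?_⟩
    rcases le_max_iff.mp (hcmin u hu) with hcu | hcu
    · apply le_max_of_le_left
      calc c * t ^ ((w 0:ℝ) * L1) ≤ c * t ^ ((d:ℝ) - w 0) :=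
            mul_le_mul_of_nonneg_left (hcomp0 t ht0 ht1) hc0.le
        _ ≤ t ^ ((d:ℝ) - w 0) * |eval u (pderiv 0 f)| := by
            have hp : (0:ℝ) < t ^ ((d:ℝ) - w 0) := Real.rpow_pos_of_pos ht0 _
            rw [mul_comm]
            exact mul_le_mul_of_nonneg_left hcu hp.le
    · apply le_max_of_le_right
      calc c * t ^ ((w 0:ℝ) * L1) ≤ c * t ^ ((d:ℝ) - w 1) :=
            mul_le_mul_of_nonneg_left (hcomp1 t ht0 ht1) hc0.le
        _ ≤ t ^ ((d:ℝ) - w 1) * |eval u (pderiv 1 f)| := by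
            have hp : (0:ℝ) < t ^ ((d:ℝ) - w 1) := Real.rpow_pos_of_pos ht0 _
            rw [mul_comm]
            exact mul_le_mul_of_nonneg_left hcu hp.le
  · push_neg at hz
    obtain ⟨c, hc0, hcmin⟩ := min_pos_on_sphere hw
      (continuous_abs.comp (MvPolynomial.continuous_eval (pderiv 0 f)))
      (fun u hu => abs_pos.mpr (hz u hu))
    refine ⟨c, hc0, fun u hu t ht0 ht1 => ?_⟩
    apply le_max_of_le_left
    calc c * t ^ ((w 0:ℝ) * L1) ≤ c * t ^ ((d:ℝ) - w 0) :=
          mul_le_mul_of_nonneg_left (hcomp0 t ht0 ht1) hc0.le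
      _ ≤ t ^ ((d:ℝ) - w 0) * |eval u (pderiv 0 f)| := by
          have hp : (0:ℝ) < t ^ ((d:ℝ) - w 0) := Real.rpow_pos_of_pos ht0 _
          rw [mul_comm]
          exact mul_le_mul_of_nonneg_left (hcmin u hu) hp.le

lemma up1 (hw : ∀ i, 0 < w i) (hw10 : w 1 ≤ w 0)
    {f : MvPolynomial (Fin 2) ℝ} {d : ℕ}
    (hf : ∀ α ∈ f.support, ∑ i, α i * w i = d) (hnd : Nondeg f)
    (hB : ∃ U ∈ nhds (0 : Fin 2 → ℝ), ∀ x ∈ U, eval x (pderiv 0 f) = 0 → x 1 = 0)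
    {lam : ℝ} (hlam : 0 < lam) (hge : ((d:ℝ) - w 0)/(w 1) ≤ lam) : LojIneq f lam := by
  have hglob := b1_global hw hf hB
  have hPne : pderiv 0 f ≠ 0 := by
    intro h
    have h1 := hglob ![0,1] (by rw [h]; simp)
    norm_num at h1
  have hdw0 : w 0 ≤ d := support_nonempty_wt hf 0 hPne
  have hw1R : (0:ℝ) < (w 1:ℝ) := Nat.cast_pos.mpr (hw 1)
  have hdw0R : (w 0:ℝ) ≤ (d:ℝ) := Nat.cast_le.mpr hdw0
  set L1 : ℝ := ((d:ℝ) - w 0)/(w 1) with hL1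
  have hL10 : 0 ≤ L1 := div_nonneg (by linarith) hw1R.le
  obtain ⟨cA, hcA0, hAbd⟩ := claimA hw hf hglob hPne
  obtain ⟨cB, hcB0, hBbd⟩ := claimB hw hw10 hf hnd hglob hPne
  set c : ℝ := min cA cB with hc
  have hc0 : 0 < c := lt_min hcA0 hcB0
  have h2L : (0:ℝ) < 2 ^ L1 := Real.rpow_pos_of_pos (by norm_num) _
  refine ⟨c / 2 ^ L1, by positivity, {x | rho w x < 1/2}, ?_, ?_⟩
  · exact (isOpen_lt (rho_continuous hw) continuous_const).mem_nhds
      (by simp [Set.mem_setOf_eq, (rho_zero_iff hw).mpr rfl])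
  · intro x hx
    rw [Set.mem_setOf_eq] at hx
    by_cases hx0 : x = 0
    · subst hx0
      have he : eNorm (0 : Fin 2 → ℝ) = 0 := by
        rw [eNorm_eq]
        norm_num
      rw [he, Real.zero_rpow hlam.ne', mul_zero]
      exact gradNorm_nonneg f 0
    · obtain ⟨u, hu1, hxu⟩ := rho_decomp hw hx0
      set t : ℝ := rho w x with htdef
      have ht0 : 0 < t := rho_pos hw hx0
      have ht1 : t ≤ 1 := by rw [htdef]; linarith
      have gA : eval x (pderiv 0 f) = t ^ ((d:ℝ) - w 0) * eval u (pderiv 0 f) := by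
        rw [hxu]; exact eval_pderiv_scl hf 0 ht0 u
      have gB : eval x (pderiv 1 f) = t ^ ((d:ℝ) - w 1) * eval u (pderiv 1 f) := by
        rw [hxu]; exact eval_pderiv_scl hf 1 ht0 u
      have habs0 : |eval x (pderiv 0 f)| = t ^ ((d:ℝ) - w 0) * |eval u (pderiv 0 f)| := by
        rw [gA, abs_mul, abs_of_nonneg (Real.rpow_pos_of_pos ht0 _).le]
      have habs1 : |eval x (pderiv 1 f)| = t ^ ((d:ℝ) - w 1) * |eval u (pderiv 1 f)| := by
        rw [gB, abs_mul, abs_of_nonneg (Real.rpow_pos_of_pos ht0 _).le]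
      have hg1 : t ^ ((d:ℝ) - w 0) * |eval u (pderiv 0 f)| ≤ gradNorm f x := by
        rw [← habs0]; exact abs_le_gradNorm f x 0
      have hg2 : t ^ ((d:ℝ) - w 1) * |eval u (pderiv 1 f)| ≤ gradNorm f x := by
        rw [← habs1]; exact abs_le_gradNorm f x 1
      have hpiece1 : c * t ^ ((w 0:ℝ) * L1) ≤ gradNorm f x := by
        have h1 := hBbd u hu1 t ht0 ht1
        have h2 : c * t ^ ((w 0:ℝ) * L1) ≤ cB * t ^ ((w 0:ℝ) * L1) := by
          apply mul_le_mul_of_nonneg_right (min_le_right _ _)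
            (Real.rpow_pos_of_pos ht0 _).le
        rcases max_cases (t ^ ((d:ℝ) - w 0) * |eval u (pderiv 0 f)|)
            (t ^ ((d:ℝ) - w 1) * |eval u (pderiv 1 f)|) with ⟨he, -⟩ | ⟨he, -⟩ <;>
          rw [he] at h1
        · linarith
        · linarith
      have hpiece2 : c * (t ^ ((w 1:ℕ):ℝ) * |u 1|) ^ L1 ≤ gradNorm f x := by
        have e1 : (t ^ ((w 1:ℕ):ℝ) * |u 1|) ^ L1 = t ^ ((d:ℝ) - w 0) * |u 1| ^ L1 := by
          rw [Real.mul_rpow (by positivity) (abs_nonneg _), ← Real.rpow_mul ht0.le]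
          congr 2
          rw [hL1]
          field_simp
        rw [e1]
        have h1 : c * |u 1| ^ L1 ≤ cA * |u 1| ^ L1 := by
          apply mul_le_mul_of_nonneg_right (min_le_left _ _)
            (Real.rpow_nonneg (abs_nonneg _) _)
        have h2 := hAbd u hu1
        have hp : (0:ℝ) < t ^ ((d:ℝ) - w 0) := Real.rpow_pos_of_pos ht0 _
        calc c * (t ^ ((d:ℝ) - w 0) * |u 1| ^ L1)
            = t ^ ((d:ℝ) - w 0) * (c * |u 1| ^ L1) := by ring
          _ ≤ t ^ ((d:ℝ) - w 0) * |eval u (pderiv 0 f)| := by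
              apply mul_le_mul_of_nonneg_left _ hp.le
              rw [← hL1] at h2
              linarith
          _ ≤ gradNorm f x := hg1
      set Aq : ℝ := t ^ ((w 0:ℕ):ℝ) with hAq
      set Bq : ℝ := t ^ ((w 1:ℕ):ℝ) * |u 1| with hBq
      have hAq0 : 0 ≤ Aq := (Real.rpow_pos_of_pos ht0 _).le
      have hBq0 : 0 ≤ Bq := mul_nonneg (Real.rpow_pos_of_pos ht0 _).le (abs_nonneg _)
      have hnorm : eNorm x ≤ Aq + Bq := by
        have k0 : |x 0| ≤ Aq := by
          have hx0' : x 0 = t ^ (w 0) * u 0 := by rw [hxu]; rfl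
          rw [hx0', abs_mul, abs_pow, abs_of_nonneg ht0.le, hAq, Real.rpow_natCast]
          have := sphere_abs_le hw hu1 0
          nlinarith [pow_pos ht0 (w 0)]
        have k1 : |x 1| ≤ Bq := by
          have hx1' : x 1 = t ^ (w 1) * u 1 := by rw [hxu]; rfl
          rw [hx1', abs_mul, abs_pow, abs_of_nonneg ht0.le, hBq, Real.rpow_natCast]
        calc eNorm x ≤ |x 0| + |x 1| := eNorm_le x
          _ ≤ Aq + Bq := add_le_add k0 k1
      have hnorm1 : eNorm x ≤ 1 := by
        have k2 : ∀ i : Fin 2, t ^ ((w i:ℕ):ℝ) ≤ t := by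
          intro i
          have h2 : t ^ ((w i:ℕ):ℝ) ≤ t ^ ((1:ℕ):ℝ) := by
            apply Real.rpow_le_rpow_of_exponent_ge ht0 ht1
            exact_mod_cast hw i
          rwa [Nat.cast_one, Real.rpow_one] at h2
        have k3 : Bq ≤ t := by
          have := sphere_abs_le hw hu1 1
          have := k2 1
          have hp : (0:ℝ) < t ^ ((w 1:ℕ):ℝ) := Real.rpow_pos_of_pos ht0 _
          rw [hBq]
          nlinarith
        have k4 : Aq ≤ t := k2 0
        linarith
      have hmono : eNorm x ^ lam ≤ eNorm x ^ L1 :=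
        Real.rpow_le_rpow_of_exponent_ge (eNorm_pos hx0) hnorm1 hge
      have hsum : eNorm x ^ L1 ≤ 2 ^ L1 * max (Aq ^ L1) (Bq ^ L1) := by
        have h1 : eNorm x ≤ 2 * max Aq Bq := by
          have := le_max_left Aq Bq
          have := le_max_right Aq Bq
          linarith
        have hmax0 : 0 ≤ max Aq Bq := le_max_of_le_left hAq0
        calc eNorm x ^ L1 ≤ (2 * max Aq Bq) ^ L1 :=
              Real.rpow_le_rpow (eNorm_nonneg x) h1 hL10
          _ = 2 ^ L1 * (max Aq Bq) ^ L1 := Real.mul_rpow (by norm_num) hmax0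
          _ ≤ 2 ^ L1 * max (Aq ^ L1) (Bq ^ L1) := by
              apply mul_le_mul_of_nonneg_left _ h2L.le
              rcases max_cases Aq Bq with ⟨he, -⟩ | ⟨he, -⟩ <;> rw [he]
              · exact le_max_left _ _
              · exact le_max_right _ _
      have hAqL : Aq ^ L1 = t ^ ((w 0:ℝ) * L1) := by
        rw [hAq, ← Real.rpow_mul ht0.le]
      have hfin : c * max (Aq ^ L1) (Bq ^ L1) ≤ gradNorm f x := by
        rcases max_cases (Aq ^ L1) (Bq ^ L1) with ⟨he, -⟩ | ⟨he, -⟩ <;> rw [he]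
        · rw [hAqL]
          exact hpiece1
        · exact hpiece2
      calc c / 2 ^ L1 * eNorm x ^ lam
          ≤ c / 2 ^ L1 * (2 ^ L1 * max (Aq ^ L1) (Bq ^ L1)) := by
            apply mul_le_mul_of_nonneg_left (hmono.trans hsum) (by positivity)
        _ = c * max (Aq ^ L1) (Bq ^ L1) := by
            rw [← mul_assoc, div_mul_cancel₀ c h2L.ne']
        _ ≤ gradNorm f x := hfin

lemma low1 (hw : ∀ i, 0 < w i) (hw10 : w 1 ≤ w 0)
    {f : MvPolynomial (Fin 2) ℝ} {d : ℕ}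
    (hf : ∀ α ∈ f.support, ∑ i, α i * w i = d)
    {lam : ℝ} (hlam : 0 < lam) (hLI : LojIneq f lam) :
    ((d:ℝ) - w 0)/(w 1) ≤ lam := by
  have hw1R : (0:ℝ) < (w 1:ℝ) := Nat.cast_pos.mpr (hw 1)
  set u : Fin 2 → ℝ := ![0,1] with hu
  have hu1 : u 1 ≠ 0 := by rw [hu]; norm_num
  set K : ℝ := |eval u (pderiv 0 f)| + |eval u (pderiv 1 f)| with hK
  have hK0 : 0 ≤ K := by positivity
  have hcurve : ∀ t : ℝ, 0 < t → t < 1 →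
      gradNorm f (scl w t u) ≤ K * t ^ ((d:ℝ) - w 0) := by
    intro t ht0 ht1
    have gA := eval_pderiv_scl hf 0 ht0 u
    have gB := eval_pderiv_scl hf 1 ht0 u
    have hee : (d:ℝ) - w 0 ≤ (d:ℝ) - w 1 := by
      have : (w 1:ℝ) ≤ (w 0:ℝ) := Nat.cast_le.mpr hw10
      linarith
    have hle : t ^ ((d:ℝ) - w 1) ≤ t ^ ((d:ℝ) - w 0) :=
      Real.rpow_le_rpow_of_exponent_ge ht0 ht1.le hee
    have hp0 : (0:ℝ) < t ^ ((d:ℝ) - w 0) := Real.rpow_pos_of_pos ht0 _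
    have hp1 : (0:ℝ) < t ^ ((d:ℝ) - w 1) := Real.rpow_pos_of_pos ht0 _
    calc gradNorm f (scl w t u)
        ≤ |eval (scl w t u) (pderiv 0 f)| + |eval (scl w t u) (pderiv 1 f)| :=
          gradNorm_le f _
      _ = t ^ ((d:ℝ) - w 0) * |eval u (pderiv 0 f)|
          + t ^ ((d:ℝ) - w 1) * |eval u (pderiv 1 f)| := by
          rw [gA, gB, abs_mul, abs_mul, abs_of_nonneg hp0.le, abs_of_nonneg hp1.le]
      _ ≤ K * t ^ ((d:ℝ) - w 0) := by
          rw [hK]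
          nlinarith [abs_nonneg (eval u (pderiv 0 f)), abs_nonneg (eval u (pderiv 1 f))]
  have := curve_bound hw hu1 hK0 hcurve hlam hLI
  rw [div_le_iff₀ hw1R]
  linarith

lemma branch1 (hw : ∀ i, 0 < w i) (hw10 : w 1 ≤ w 0)
    {f : MvPolynomial (Fin 2) ℝ} {d : ℕ}
    (hf : ∀ α ∈ f.support, ∑ i, α i * w i = d) (hnd : Nondeg f)
    (hB : ∃ U ∈ nhds (0 : Fin 2 → ℝ), ∀ x ∈ U, eval x (pderiv 0 f) = 0 → x 1 = 0) :
    lojExp f = ((d:ℝ) - w 0)/(w 1) := by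
  have hglob := b1_global hw hf hB
  have hPne : pderiv 0 f ≠ 0 := by
    intro h
    have h1 := hglob ![0,1] (by rw [h]; simp)
    norm_num at h1
  have hdw0 : w 0 ≤ d := support_nonempty_wt hf 0 hPne
  have hw1R : (0:ℝ) < (w 1:ℝ) := Nat.cast_pos.mpr (hw 1)
  have hdw0R : (w 0:ℝ) ≤ (d:ℝ) := Nat.cast_le.mpr hdw0
  have hL0 : (0:ℝ) ≤ ((d:ℝ) - w 0)/(w 1) := div_nonneg (by linarith) hw1R.le
  apply lojExp_eq _ hL0
  · intro lam hlt
    exact up1 hw hw10 hf hnd hB (lt_of_le_of_lt hL0 hlt) (le_of_lt hlt)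
  · intro lam hlam hLI
    exact low1 hw hw10 hf hlam hLI

end LojAux

theorem stmt0 (d w₁ w₂ : ℕ) (hd : 0 < d) (hw₂ : 0 < w₂) (hw : w₂ ≤ w₁)
    (f : MvPolynomial (Fin 2) ℝ)
    (hhom : IsWeightedHomog f ![w₁, w₂] d)
    (hnd : Nondeg f) :
    ((∃ U ∈ nhds (0 : Fin 2 → ℝ), ∀ x ∈ U,
        eval x (pderiv 0 f) = 0 → x 1 = 0) →
      lojExp f = ((d : ℝ) - w₁) / w₂) ∧
    ((¬ ∃ U ∈ nhds (0 : Fin 2 → ℝ), ∀ x ∈ U,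
        eval x (pderiv 0 f) = 0 → x 1 = 0) →
      lojExp f = (d : ℝ) / w₂ - 1) := by
  have hwpos : ∀ i : Fin 2, 0 < (![w₁, w₂] : Fin 2 → ℕ) i := by
    intro i
    obtain rfl | rfl := LojAux.fin2_cases i
    · simpa using lt_of_lt_of_le hw₂ hw
    · simpa using hw₂
  have hw10 : (![w₁, w₂] : Fin 2 → ℕ) 1 ≤ (![w₁, w₂] : Fin 2 → ℕ) 0 := by simpa using hw
  have hf : ∀ α ∈ f.support, ∑ i, α i * (![w₁, w₂] : Fin 2 → ℕ) i = d := hhom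
  constructor
  · intro hB
    have h := LojAux.branch1 hwpos hw10 hf hnd hB
    simpa using h
  · intro hB
    have h := LojAux.branch2 hwpos hw10 hf hnd hB
    simpa using h
end

section
/- Let f : ℝ² → ℝ be a non-degenerate weighted homogeneous polynomial of type (d; w₁, w₂) with w₁ ≥ w₂, and suppose there is a neighborhood U of the origin such that every (x₁, x₂) ∈ U with ∂f/∂x₁(x₁, x₂) = 0 satisfies x₂ = 0. Then the Łojasiewicz exponent of f equals L(f) = (d − w₁)/w₂. -/
open MvPolynomial

/-! ### Auxiliary lemmas -/

lemma scale_eval (w₁ w₂ e : ℕ) (g : MvPolynomial (Fin 2) ℝ)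
    (hg : ∀ α ∈ g.support, α 0 * w₁ + α 1 * w₂ = e) (t : ℝ) (x : Fin 2 → ℝ) :
    eval (fun j => t ^ (![w₁, w₂] j) * x j) g = t ^ e * eval x g := by
  rw [eval_eq', eval_eq', Finset.mul_sum]
  refine Finset.sum_congr rfl fun α hα => ?_
  have h := hg α hα
  rw [Fin.prod_univ_two, Fin.prod_univ_two]
  simp only [Matrix.cons_val_zero, Matrix.cons_val_one, Matrix.head_cons]
  rw [mul_pow, mul_pow, ← pow_mul, ← pow_mul, ← h]
  rw [pow_add]
  ring

lemma supp_pderiv {f : MvPolynomial (Fin 2) ℝ} {i : Fin 2} {α : Fin 2 →₀ ℕ}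
    (hα : α ∈ (pderiv i f).support) :
    ∃ β ∈ f.support, β i ≠ 0 ∧ α = β - Finsupp.single i 1 := by
  classical
  have h1 : pderiv i f = ∑ β ∈ f.support, monomial (β - Finsupp.single i 1) (coeff β f * β i) := by
    conv_lhs => rw [f.as_sum]
    rw [map_sum]
    exact Finset.sum_congr rfl fun β _ => by rw [pderiv_monomial]
  rw [h1] at hα
  have h2 := MvPolynomial.support_sum hα
  simp only [Finset.mem_biUnion] at h2
  obtain ⟨β, hβ, hmem⟩ := h2
  rw [support_monomial] at hmem
  by_cases hc : coeff β f * (β i : ℝ) = 0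
  · rw [if_pos hc] at hmem; exact absurd hmem (Finset.notMem_empty α)
  · rw [if_neg hc] at hmem
    refine ⟨β, hβ, ?_, Finset.mem_singleton.mp hmem⟩
    intro h0
    exact hc (by rw [h0]; simp)

lemma supp_pderiv_deg {f : MvPolynomial (Fin 2) ℝ} {w₁ w₂ d : ℕ}
    (hhom : IsWeightedHomog f ![w₁, w₂] d) {i : Fin 2} {α : Fin 2 →₀ ℕ}
    (hα : α ∈ (pderiv i f).support) :
    α 0 * w₁ + α 1 * w₂ + ![w₁, w₂] i = d := by
  obtain ⟨β, hβ, hβi, rfl⟩ := supp_pderiv hα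
  have hd := hhom β hβ
  rw [Fin.sum_univ_two] at hd
  simp only [Matrix.cons_val_zero, Matrix.cons_val_one, Matrix.head_cons] at hd ⊢
  rw [Finsupp.tsub_apply, Finsupp.tsub_apply]
  fin_cases i
  · simp_all
    have h1 : (β 0 - 1) * w₁ = β 0 * w₁ - w₁ := Nat.sub_one_mul _ _
    have h2 : w₁ ≤ β 0 * w₁ := Nat.le_mul_of_pos_left _ (Nat.pos_of_ne_zero hβi)
    omega
  · simp_all
    have h1 : (β 1 - 1) * w₂ = β 1 * w₂ - w₂ := Nat.sub_one_mul _ _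
    have h2 : w₂ ≤ β 1 * w₂ := Nat.le_mul_of_pos_left _ (Nat.pos_of_ne_zero hβi)
    omega

lemma exists_scaled_mem (w₁ w₂ : ℕ) (hw₁ : 0 < w₁) (hw₂ : 0 < w₂) (x : Fin 2 → ℝ)
    {U : Set (Fin 2 → ℝ)} (hU : U ∈ nhds 0) :
    ∃ t : ℝ, 0 < t ∧ (fun j => t ^ (![w₁, w₂] j) * x j) ∈ U := by
  have hcont : Continuous fun t : ℝ => (fun j => t ^ (![w₁, w₂] j) * x j : Fin 2 → ℝ) :=
    continuous_pi fun j => (continuous_pow _).mul continuous_const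
  have h0 : (fun j => (0:ℝ) ^ (![w₁, w₂] j) * x j) = (0 : Fin 2 → ℝ) := by
    funext j
    have : ![w₁, w₂] j ≠ 0 := by fin_cases j <;> simp <;> omega
    simp [zero_pow this]
  have ht : Filter.Tendsto (fun t : ℝ => (fun j => t ^ (![w₁, w₂] j) * x j : Fin 2 → ℝ))
      (nhdsWithin 0 (Set.Ioi 0)) (nhds 0) := by
    have := hcont.tendsto 0
    rw [h0] at this
    exact this.mono_left nhdsWithin_le_nhds
  have h1 := ht.eventually_mem hU
  have h2 : ∀ᶠ t in nhdsWithin (0:ℝ) (Set.Ioi 0), t ∈ Set.Ioi (0:ℝ) :=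
    self_mem_nhdsWithin
  obtain ⟨t, htU, htpos⟩ := (h1.and h2).exists
  exact ⟨t, htpos, htU⟩

lemma abs_le_gradNorm (f : MvPolynomial (Fin 2) ℝ) (x : Fin 2 → ℝ) (i : Fin 2) :
    |eval x (pderiv i f)| ≤ gradNorm f x := by
  rw [gradNorm, ← Real.sqrt_sq_eq_abs]
  apply Real.sqrt_le_sqrt
  rw [Fin.sum_univ_two]
  fin_cases i <;> simp <;> positivity

lemma gradNorm_le (f : MvPolynomial (Fin 2) ℝ) (x : Fin 2 → ℝ) :
    gradNorm f x ≤ |eval x (pderiv 0 f)| + |eval x (pderiv 1 f)| := by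
  rw [gradNorm, Fin.sum_univ_two]
  rw [show (|eval x (pderiv 0 f)| + |eval x (pderiv 1 f)|) =
    Real.sqrt ((|eval x (pderiv 0 f)| + |eval x (pderiv 1 f)|) ^ 2) by
      rw [Real.sqrt_sq (by positivity)]]
  apply Real.sqrt_le_sqrt
  have h0 : |eval x (pderiv 0 f)| * |eval x (pderiv 1 f)| ≥ 0 := by positivity
  nlinarith [sq_abs (eval x (pderiv 0 f)), sq_abs (eval x (pderiv 1 f))]

lemma eNorm_le (x : Fin 2 → ℝ) : eNorm x ≤ |x 0| + |x 1| := by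
  rw [eNorm, Fin.sum_univ_two]
  rw [show (|x 0| + |x 1|) = Real.sqrt ((|x 0| + |x 1|) ^ 2) by
      rw [Real.sqrt_sq (by positivity)]]
  apply Real.sqrt_le_sqrt
  have h0 : |x 0| * |x 1| ≥ 0 := by positivity
  nlinarith [sq_abs (x 0), sq_abs (x 1)]

lemma rpow_add_le (a b p : ℝ) (ha : 0 ≤ a) (hb : 0 ≤ b) (hp : 0 ≤ p) :
    (a + b) ^ p ≤ 2 ^ p * (a ^ p + b ^ p) := by
  rcases le_total a b with h | h
  · calc (a + b) ^ p ≤ (2 * b) ^ p := by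
          apply Real.rpow_le_rpow (by linarith) (by linarith) hp
    _ = 2 ^ p * b ^ p := Real.mul_rpow (by norm_num) hb
    _ ≤ 2 ^ p * (a ^ p + b ^ p) := by
          have := Real.rpow_nonneg ha p
          have h2 : (0:ℝ) ≤ 2 ^ p := Real.rpow_nonneg (by norm_num) p
          nlinarith
  · calc (a + b) ^ p ≤ (2 * a) ^ p := by
          apply Real.rpow_le_rpow (by linarith) (by linarith) hp
    _ = 2 ^ p * a ^ p := Real.mul_rpow (by norm_num) ha
    _ ≤ 2 ^ p * (a ^ p + b ^ p) := by
          have := Real.rpow_nonneg hb p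
          have h2 : (0:ℝ) ≤ 2 ^ p := Real.rpow_nonneg (by norm_num) p
          nlinarith

lemma eNorm_nonneg {n : ℕ} (x : Fin n → ℝ) : 0 ≤ eNorm x := Real.sqrt_nonneg _

lemma gradNorm_nonneg {n : ℕ} (f : MvPolynomial (Fin n) ℝ) (x : Fin n → ℝ) :
    0 ≤ gradNorm f x := Real.sqrt_nonneg _

lemma eNorm_le_one {x : Fin 2 → ℝ} (hx : x ∈ Metric.ball (0 : Fin 2 → ℝ) (1/2)) :
    eNorm x ≤ 1 := by
  rw [Metric.mem_ball] at hx
  have h0 : dist (x 0) 0 < 1/2 := lt_of_le_of_lt (dist_le_pi_dist x 0 0) hx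
  have h1 : dist (x 1) 0 < 1/2 := lt_of_le_of_lt (dist_le_pi_dist x 0 1) hx
  rw [Real.dist_eq, sub_zero] at h0 h1
  rw [eNorm, Fin.sum_univ_two, show (1:ℝ) = Real.sqrt 1 by rw [Real.sqrt_one]]
  apply Real.sqrt_le_sqrt
  nlinarith [abs_nonneg (x 0), abs_nonneg (x 1), sq_abs (x 0), sq_abs (x 1)]

lemma rpow_le_rpow_exp {y a b : ℝ} (hy : 0 ≤ y) (hy1 : y ≤ 1) (ha : 0 ≤ a) (hab : a ≤ b) :
    y ^ b ≤ y ^ a := by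
  rcases eq_or_lt_of_le hy with h0 | h0
  · rw [← h0]
    rcases eq_or_lt_of_le ha with ha0 | ha0
    · rw [← ha0, Real.rpow_zero]
      rcases eq_or_lt_of_le (ha.trans hab) with hb0 | hb0
      · rw [← hb0, Real.rpow_zero]
      · rw [Real.zero_rpow (ne_of_gt hb0)]; norm_num
    · rw [Real.zero_rpow (ne_of_gt ha0), Real.zero_rpow (ne_of_gt (lt_of_lt_of_le ha0 hab))]
  · exact Real.rpow_le_rpow_of_exponent_ge h0 hy1 hab

lemma lojIneq_mono {f : MvPolynomial (Fin 2) ℝ} {a b : ℝ} (ha : 0 ≤ a) (hab : a ≤ b)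
    (h : LojIneq f a) : LojIneq f b := by
  obtain ⟨C, hC, U, hU, hb⟩ := h
  refine ⟨C, hC, U ∩ Metric.ball 0 (1/2),
    Filter.inter_mem hU (Metric.ball_mem_nhds _ (by norm_num)), ?_⟩
  rintro x ⟨hxU, hxB⟩
  calc C * eNorm x ^ b ≤ C * eNorm x ^ a := by
        apply mul_le_mul_of_nonneg_left _ (le_of_lt hC)
        exact rpow_le_rpow_exp (eNorm_nonneg x) (eNorm_le_one hxB) ha hab
  _ ≤ gradNorm f x := hb x hxU


lemma rpow_half_bound {a : ℝ} {n : ℕ} (ha : 0 ≤ a) (hn : 0 < n) (h : a ≤ (1/2:ℝ)^n) :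
    a ^ ((2:ℝ)/n) ≤ 1/4 := by
  have hnr : (0:ℝ) < n := by exact_mod_cast hn
  have hp : (0:ℝ) ≤ 2/(n:ℝ) := by positivity
  have h2 : a ^ ((2:ℝ)/n) ≤ ((1/2:ℝ)^n) ^ ((2:ℝ)/n) := Real.rpow_le_rpow ha h hp
  refine h2.trans (le_of_eq ?_)
  rw [← Real.rpow_natCast (1/2:ℝ) n, ← Real.rpow_mul (by norm_num)]
  rw [show (n:ℝ) * ((2:ℝ)/n) = 2 by field_simp]
  rw [show (2:ℝ) = ((2:ℕ):ℝ) by norm_num, Real.rpow_natCast]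
  norm_num

set_option maxHeartbeats 2000000 in
theorem stmt1 (d w₁ w₂ : ℕ) (hd : 0 < d) (hw₂ : 0 < w₂) (hw : w₂ ≤ w₁)
    (f : MvPolynomial (Fin 2) ℝ)
    (hhom : IsWeightedHomog f ![w₁, w₂] d)
    (hnd : Nondeg f)
    (hcase : ∃ U ∈ nhds (0 : Fin 2 → ℝ), ∀ x ∈ U,
      eval x (pderiv 0 f) = 0 → x 1 = 0) :
    lojExp f = ((d : ℝ) - w₁) / w₂ := by
  classical
  have hw₁ : 0 < w₁ := lt_of_lt_of_le hw₂ hw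
  have hdeg0 : ∀ α ∈ (pderiv 0 f).support, α 0 * w₁ + α 1 * w₂ = d - w₁ := by
    intro α hα
    have h := supp_pderiv_deg hhom hα
    simp only [Matrix.cons_val_zero] at h
    omega
  have hdeg1 : ∀ α ∈ (pderiv 1 f).support, α 0 * w₁ + α 1 * w₂ = d - w₂ := by
    intro α hα
    have h := supp_pderiv_deg hhom hα
    simp only [Matrix.cons_val_one, Matrix.head_cons, Matrix.cons_val_zero] at h
    omega
  have hscale0 : ∀ (t : ℝ) (x : Fin 2 → ℝ),
      eval (fun j => t ^ (![w₁, w₂] j) * x j) (pderiv 0 f) =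
        t ^ (d - w₁) * eval x (pderiv 0 f) :=
    fun t x => scale_eval w₁ w₂ (d - w₁) _ hdeg0 t x
  have hscale1 : ∀ (t : ℝ) (x : Fin 2 → ℝ),
      eval (fun j => t ^ (![w₁, w₂] j) * x j) (pderiv 1 f) =
        t ^ (d - w₂) * eval x (pderiv 1 f) :=
    fun t x => scale_eval w₁ w₂ (d - w₂) _ hdeg1 t x
  -- globalized hypotheses
  have ghc : ∀ x : Fin 2 → ℝ, eval x (pderiv 0 f) = 0 → x 1 = 0 := by
    obtain ⟨U, hU, hloc⟩ := hcase
    intro x hx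
    obtain ⟨t, ht, htU⟩ := exists_scaled_mem w₁ w₂ hw₁ hw₂ x hU
    have h2 := hloc _ htU (by rw [hscale0, hx, mul_zero])
    simp only [Matrix.cons_val_one, Matrix.head_cons] at h2
    rcases mul_eq_zero.mp h2 with h3 | h3
    · exact absurd h3 (pow_ne_zero _ (ne_of_gt ht))
    · exact h3
  have gnd : ∀ x : Fin 2 → ℝ,
      eval x (pderiv 0 f) = 0 → eval x (pderiv 1 f) = 0 → x = 0 := by
    obtain ⟨V, hV, hloc⟩ := hnd
    intro x hx0 hx1
    obtain ⟨t, ht, htV⟩ := exists_scaled_mem w₁ w₂ hw₁ hw₂ x hV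
    have h2 := hloc _ htV (by
      intro i
      fin_cases i
      · show (eval fun j => t ^ (![w₁, w₂] j) * x j) (pderiv 0 f) = 0
        rw [hscale0, hx0, mul_zero]
      · show (eval fun j => t ^ (![w₁, w₂] j) * x j) (pderiv 1 f) = 0
        rw [hscale1, hx1, mul_zero])
    funext j
    have h3 := congrFun h2 j
    simp only [Pi.zero_apply] at h3 ⊢
    rcases mul_eq_zero.mp h3 with h4 | h4
    · exact absurd h4 (pow_ne_zero _ (ne_of_gt ht))
    · exact h4
  have hg0 : pderiv 0 f ≠ 0 := by
    intro h
    have h2 := ghc ![0, 1] (by rw [h]; simp)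
    simp at h2
  have hsupp : (pderiv 0 f).support.Nonempty := by
    rwa [Finset.nonempty_iff_ne_empty, Ne, MvPolynomial.support_eq_empty]
  obtain ⟨α₀, hα₀⟩ := hsupp
  have hdw₁ : w₁ ≤ d := by
    have h := supp_pderiv_deg hhom hα₀
    simp only [Matrix.cons_val_zero] at h
    omega
  by_cases hdcase : d = w₁
  · -- d = w₁ : the exponent is 0 and the gradient is bounded below
    have hall : ∀ α ∈ (pderiv 0 f).support, α = 0 := by
      intro α hα
      have h := hdeg0 α hα
      rw [hdcase, Nat.sub_self] at h
      have h0 : α 0 * w₁ = 0 := by omega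
      have h1 : α 1 * w₂ = 0 := by omega
      ext j
      fin_cases j
      · show α 0 = 0
        rcases Nat.mul_eq_zero.mp h0 with h | h
        · exact h
        · omega
      · show α 1 = 0
        rcases Nat.mul_eq_zero.mp h1 with h | h
        · exact h
        · omega
    have hconst : ∀ x : Fin 2 → ℝ, eval x (pderiv 0 f) = coeff 0 (pderiv 0 f) := by
      intro x
      rw [eval_eq']
      rcases Finset.eq_empty_or_nonempty (pderiv 0 f).support with he | hne
      · exact absurd (MvPolynomial.support_eq_empty.mp he) hg0
      rw [Finset.sum_eq_single (0 : Fin 2 →₀ ℕ)]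
      · simp
      · intro α hα hne2
        exact absurd (hall α hα) hne2
      · intro h0
        rw [MvPolynomial.notMem_support_iff.mp h0]
        ring
    have hc : coeff 0 (pderiv 0 f) ≠ 0 := by
      intro h
      have h2 := ghc ![0, 1] (by rw [hconst]; exact h)
      simp at h2
    have hset : {lam : ℝ | 0 < lam ∧ LojIneq f lam} = Set.Ioi 0 := by
      ext lam
      simp only [Set.mem_setOf_eq, Set.mem_Ioi]
      constructor
      · exact And.left
      · intro hlam
        refine ⟨hlam, |coeff 0 (pderiv 0 f)|, abs_pos.mpr hc,
          Metric.ball 0 (1/2), Metric.ball_mem_nhds _ (by norm_num), ?_⟩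
        intro x hx
        calc |coeff 0 (pderiv 0 f)| * eNorm x ^ lam
            ≤ |coeff 0 (pderiv 0 f)| * 1 := by
              apply mul_le_mul_of_nonneg_left _ (abs_nonneg _)
              exact Real.rpow_le_one (eNorm_nonneg x) (eNorm_le_one hx) (le_of_lt hlam)
          _ = |eval x (pderiv 0 f)| := by rw [mul_one, hconst]
          _ ≤ gradNorm f x := abs_le_gradNorm f x 0
    rw [lojExp, hset, csInf_Ioi, hdcase, sub_self, zero_div]
  · -- d > w₁, in fact d ≥ w₁ + w₂
    have hd2 : w₁ + w₂ ≤ d := by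
      have h := hdeg0 α₀ hα₀
      rcases Nat.eq_zero_or_pos (α₀ 0) with h0 | h0
      · rcases Nat.eq_zero_or_pos (α₀ 1) with h1 | h1
        · rw [h0, h1] at h
          simp at h
          omega
        · have h2 : w₂ ≤ α₀ 1 * w₂ := Nat.le_mul_of_pos_left _ h1
          omega
      · have h2 : w₁ ≤ α₀ 0 * w₁ := Nat.le_mul_of_pos_left _ h0
        omega
    set lam0 : ℝ := ((d : ℝ) - w₁) / w₂ with hlam0def
    have hdr : (w₁ : ℝ) + w₂ ≤ (d : ℝ) := by exact_mod_cast hd2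
    have hwr : (w₂ : ℝ) ≤ (w₁ : ℝ) := by exact_mod_cast hw
    have hw₂r : (0 : ℝ) < w₂ := by exact_mod_cast hw₂
    have hw₁r : (0 : ℝ) < w₁ := by exact_mod_cast hw₁
    have hlam0pos : 0 < lam0 := by
      apply div_pos _ hw₂r
      linarith
    have hrw2 : (w₂ : ℝ) * lam0 = (d : ℝ) - w₁ := by
      rw [hlam0def]
      field_simp
    have hrw1 : ((d : ℝ) - w₂) ≤ (w₁ : ℝ) * lam0 := by
      rw [hlam0def, mul_div_assoc', le_div_iff₀ hw₂r]
      nlinarith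
    -- the minimal exponent of x₁ in ∂₀f
    have hMne : ((pderiv 0 f).support.image fun α => α 1).Nonempty :=
      ⟨α₀ 1, Finset.mem_image_of_mem _ hα₀⟩
    set m : ℕ := ((pderiv 0 f).support.image fun α => α 1).min' hMne with hmdef
    obtain ⟨αs, hαs, hαs1⟩ : ∃ αs ∈ (pderiv 0 f).support, αs 1 = m := by
      have h := Finset.min'_mem _ hMne
      rw [Finset.mem_image] at h
      obtain ⟨αs, h1, h2⟩ := h
      exact ⟨αs, h1, h2⟩
    have hmle : ∀ α ∈ (pderiv 0 f).support, m ≤ α 1 := fun α hα =>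
      Finset.min'_le _ _ (Finset.mem_image_of_mem _ hα)
    have huniq : ∀ α ∈ (pderiv 0 f).support, α 1 = m → α = αs := by
      intro α hα h1
      have hdα := hdeg0 α hα
      have hdαs := hdeg0 αs hαs
      have h4 : α 1 * w₂ = αs 1 * w₂ := by rw [h1, hαs1]
      have h2 : α 0 * w₁ = αs 0 * w₁ := by omega
      have h3 : α 0 = αs 0 := Nat.eq_of_mul_eq_mul_right hw₁ h2
      ext j
      fin_cases j
      · exact h3
      · show α 1 = αs 1
        omega
    have hkey : αs 0 * w₁ + m * w₂ + w₁ = d := by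
      have h := hdeg0 αs hαs
      rw [← hαs1]
      omega
    have hmlam : (m : ℝ) ≤ lam0 := by
      rw [hlam0def, le_div_iff₀ hw₂r]
      have h5 : ((αs 0 * w₁ + m * w₂ + w₁ : ℕ) : ℝ) = (d : ℝ) := by exact_mod_cast hkey
      push_cast at h5
      nlinarith [mul_nonneg (Nat.cast_nonneg (α := ℝ) (αs 0)) (le_of_lt hw₁r)]
    -- the cofactor H with ∂₀f = x₁^m H
    set H : (Fin 2 → ℝ) → ℝ := fun x =>
      ∑ α ∈ (pderiv 0 f).support, coeff α (pderiv 0 f) * x 0 ^ α 0 * x 1 ^ (α 1 - m)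
      with hHdef
    have hfact : ∀ x : Fin 2 → ℝ, eval x (pderiv 0 f) = x 1 ^ m * H x := by
      intro x
      rw [eval_eq', hHdef, Finset.mul_sum]
      refine Finset.sum_congr rfl fun α hα => ?_
      rw [Fin.prod_univ_two]
      have h1 : x 1 ^ α 1 = x 1 ^ m * x 1 ^ (α 1 - m) := by
        rw [← pow_add]
        congr 1
        have := hmle α hα
        omega
      rw [h1]
      ring
    have hHcont : Continuous H := by
      rw [hHdef]
      apply continuous_finset_sum
      intro α _
      exact (continuous_const.mul ((continuous_apply 0).pow _)).mul
        ((continuous_apply 1).pow _)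
    have hHaxis : ∀ x : Fin 2 → ℝ, x 1 = 0 → H x = coeff αs (pderiv 0 f) * x 0 ^ (αs 0) := by
      intro x h1
      simp only [hHdef]
      rw [Finset.sum_eq_single αs]
      · rw [hαs1, Nat.sub_self, pow_zero, mul_one]
      · intro α hα hne
        have h2 : m < α 1 := lt_of_le_of_ne (hmle α hα) fun h => hne (huniq α hα h.symm)
        rw [h1, zero_pow (by omega), mul_zero]
      · intro h
        exact absurd hαs h
    -- the weighted sphere
    set S : Set (Fin 2 → ℝ) :=
      {u | |u 0| ^ ((2:ℝ)/w₁) + |u 1| ^ ((2:ℝ)/w₂) = 1} with hSdef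
    have hexp1 : (0:ℝ) < 2/w₁ := by positivity
    have hexp2 : (0:ℝ) < 2/w₂ := by positivity
    have habs1 : ∀ u ∈ S, |u 0| ≤ 1 ∧ |u 1| ≤ 1 := by
      intro u hu
      have h0 : (0:ℝ) ≤ |u 0| ^ ((2:ℝ)/w₁) := Real.rpow_nonneg (abs_nonneg _) _
      have h1 : (0:ℝ) ≤ |u 1| ^ ((2:ℝ)/w₂) := Real.rpow_nonneg (abs_nonneg _) _
      have hS := hu
      rw [hSdef, Set.mem_setOf_eq] at hS
      constructor
      · by_contra hgt
        push_neg at hgt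
        have := (Real.one_lt_rpow_iff_of_pos (lt_trans one_pos hgt)).mpr
          (Or.inl ⟨hgt, hexp1⟩)
        linarith
      · by_contra hgt
        push_neg at hgt
        have := (Real.one_lt_rpow_iff_of_pos (lt_trans one_pos hgt)).mpr
          (Or.inl ⟨hgt, hexp2⟩)
        linarith
    have hScont : Continuous fun u : Fin 2 → ℝ =>
        |u 0| ^ ((2:ℝ)/w₁) + |u 1| ^ ((2:ℝ)/w₂) := by
      apply Continuous.add
      · exact ((continuous_apply 0).abs).rpow_const fun x => Or.inr (le_of_lt hexp1)
      · exact ((continuous_apply 1).abs).rpow_const fun x => Or.inr (le_of_lt hexp2)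
    have hSclosed : IsClosed S := isClosed_eq hScont continuous_const
    have hScompact : IsCompact S := by
      apply (isCompact_closedBall (0 : Fin 2 → ℝ) 1).of_isClosed_subset hSclosed
      intro u hu
      rw [Metric.mem_closedBall]
      rw [dist_pi_le_iff (by norm_num : (0:ℝ) ≤ 1)]
      intro j
      rw [Real.dist_eq, Pi.zero_apply, sub_zero]
      fin_cases j
      · exact (habs1 u hu).1
      · exact (habs1 u hu).2
    have hSne : (![1, 0] : Fin 2 → ℝ) ∈ S := by
      simp only [hSdef, Set.mem_setOf_eq, Matrix.cons_val_zero, Matrix.cons_val_one,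
        Matrix.head_cons, abs_one, abs_zero, Real.one_rpow,
        Real.zero_rpow (ne_of_gt hexp2)]
      norm_num
    have hzS : ∀ u ∈ S, u 1 = 0 → |u 0| = 1 := by
      intro u hu h1
      have hS := hu
      rw [hSdef, Set.mem_setOf_eq, h1] at hS
      rw [abs_zero, Real.zero_rpow (ne_of_gt hexp2), add_zero] at hS
      by_contra hne
      rcases lt_or_gt_of_ne hne with hlt | hgt
      · have := Real.rpow_lt_one (abs_nonneg _) hlt hexp1
        linarith
      · have := (Real.one_lt_rpow_iff_of_pos (lt_trans one_pos hgt)).mpr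
          (Or.inl ⟨hgt, hexp1⟩)
        linarith
    have hHneS : ∀ u ∈ S, H u ≠ 0 := by
      intro u hu hH0
      by_cases h1 : u 1 = 0
      · have h2 := hHaxis u h1
        rw [hH0] at h2
        have hc : coeff αs (pderiv 0 f) ≠ 0 := MvPolynomial.mem_support_iff.mp hαs
        have hu0 : u 0 ≠ 0 := by
          intro h
          have := hzS u hu h1
          rw [h, abs_zero] at this
          norm_num at this
        exact (mul_ne_zero hc (pow_ne_zero _ hu0)) h2.symm
      · apply h1
        apply ghc
        rw [hfact u, hH0, mul_zero]
    -- minimum of |H| on S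
    obtain ⟨u₁, hu₁S, hu₁min⟩ :=
      hScompact.exists_isMinOn ⟨_, hSne⟩ (hHcont.abs.continuousOn)
    set δ₁ : ℝ := |H u₁| with hδ₁def
    have hδ₁pos : 0 < δ₁ := abs_pos.mpr (hHneS u₁ hu₁S)
    have hδ₁le : ∀ u ∈ S, δ₁ ≤ |H u| := fun u hu => hu₁min hu
    -- minimum of G on S
    set G : (Fin 2 → ℝ) → ℝ := fun u =>
      max |u 1| (max |eval u (pderiv 0 f)| |eval u (pderiv 1 f)|) with hGdef
    have hGcont : Continuous G := by
      apply Continuous.max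
      · exact (continuous_apply 1).abs
      · exact Continuous.max (MvPolynomial.continuous_eval _).abs
          (MvPolynomial.continuous_eval _).abs
    obtain ⟨u₂, hu₂S, hu₂min⟩ :=
      hScompact.exists_isMinOn ⟨_, hSne⟩ (hGcont.continuousOn)
    have hGpos : 0 < G u₂ := by
      by_contra hle
      push_neg at hle
      have h1 : |u₂ 1| ≤ 0 := le_trans (le_max_left _ _) hle
      have h2 : |eval u₂ (pderiv 0 f)| ≤ 0 :=
        le_trans ((le_max_left _ _).trans (le_max_right _ _)) hle
      have h3 : |eval u₂ (pderiv 1 f)| ≤ 0 :=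
        le_trans ((le_max_right _ _).trans (le_max_right _ _)) hle
      have hz : u₂ = 0 := gnd u₂ (abs_nonpos_iff.mp h2) (abs_nonpos_iff.mp h3)
      have h4 := hzS u₂ hu₂S (abs_nonpos_iff.mp h1)
      rw [hz] at h4
      simp at h4
    set c : ℝ := min (G u₂) 1 with hcdef
    have hcpos : 0 < c := lt_min hGpos one_pos
    have hcle1 : c ≤ 1 := min_le_right _ _
    have hGbound : ∀ u ∈ S, c ≤ G u := fun u hu =>
      le_trans (min_le_left _ _) (hu₂min hu)
    -- upper bound : the Łojasiewicz inequality holds with exponent lam0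
    have htmono : ∀ t : ℝ, 0 < t → t ≤ 1 → t ^ (d - w₂) ≤ t ^ (d - w₁) :=
      fun t h0 h1 => pow_le_pow_of_le_one (le_of_lt h0) h1 (Nat.sub_le_sub_left hw d)
    have hdw₂' : w₂ ≤ d := le_trans (Nat.le_add_left _ _) hd2
    have hupper : LojIneq f lam0 := by
      set r : ℝ := min ((1/2 : ℝ) ^ w₁) ((1/2 : ℝ) ^ w₂) with hrdef
      have hrpos : 0 < r := lt_min (by positivity) (by positivity)
      set η : ℝ := c / 2 with hηdef
      have hηpos : 0 < η := by rw [hηdef]; linarith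
      have hηm : 0 < η ^ m := pow_pos hηpos m
      set K0 : ℝ := 2 ^ lam0 * ((1/c + 1/δ₁) + (1/η ^ m + 1)/δ₁) with hK0def
      have h2pos : (0:ℝ) < 2 ^ lam0 := Real.rpow_pos_of_pos two_pos _
      have hK0pos : 0 < K0 := by
        apply mul_pos h2pos
        have e1 : 0 < 1/c := one_div_pos.mpr hcpos
        have e2 : 0 < 1/δ₁ := one_div_pos.mpr hδ₁pos
        have e3 : 0 < (1/η ^ m + 1)/δ₁ := div_pos (by positivity) hδ₁pos
        linarith
      refine ⟨K0⁻¹, by positivity, Metric.ball 0 r, Metric.ball_mem_nhds _ hrpos, ?_⟩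
      intro x hx
      by_cases hx0 : x = 0
      · rw [hx0]
        have he0 : eNorm (0 : Fin 2 → ℝ) = 0 := by
          rw [eNorm, Fin.sum_univ_two]
          norm_num
        rw [he0, Real.zero_rpow (ne_of_gt hlam0pos), mul_zero]
        exact gradNorm_nonneg f 0
      -- the point is nonzero
      have hxr : ∀ i : Fin 2, |x i| < r := by
        intro i
        rw [Metric.mem_ball] at hx
        have h1 := lt_of_le_of_lt (dist_le_pi_dist x 0 i) hx
        rwa [Real.dist_eq, Pi.zero_apply, sub_zero] at h1
      set σ : ℝ := |x 0| ^ ((2:ℝ)/w₁) + |x 1| ^ ((2:ℝ)/w₂) with hσdef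
      have hσnn0 : (0:ℝ) ≤ |x 0| ^ ((2:ℝ)/w₁) := Real.rpow_nonneg (abs_nonneg _) _
      have hσnn1 : (0:ℝ) ≤ |x 1| ^ ((2:ℝ)/w₂) := Real.rpow_nonneg (abs_nonneg _) _
      have hσpos : 0 < σ := by
        rw [hσdef]
        obtain ⟨j, hj⟩ : ∃ j, x j ≠ 0 := by
          by_contra hall
          push_neg at hall
          exact hx0 (funext hall)
        fin_cases j
        · have h1 : (0:ℝ) < |x 0| ^ ((2:ℝ)/w₁) :=
            Real.rpow_pos_of_pos (abs_pos.mpr hj) _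
          linarith
        · have h1 : (0:ℝ) < |x 1| ^ ((2:ℝ)/w₂) :=
            Real.rpow_pos_of_pos (abs_pos.mpr hj) _
          linarith
      have hσ1 : σ ≤ 1 := by
        have h0 : |x 0| ^ ((2:ℝ)/w₁) ≤ 1/4 :=
          rpow_half_bound (abs_nonneg _) hw₁ ((hxr 0).le.trans (min_le_left _ _))
        have h1 : |x 1| ^ ((2:ℝ)/w₂) ≤ 1/4 :=
          rpow_half_bound (abs_nonneg _) hw₂ ((hxr 1).le.trans (min_le_right _ _))
        rw [hσdef]; linarith
      set t : ℝ := Real.sqrt σ with htdef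
      have htpos : 0 < t := Real.sqrt_pos.mpr hσpos
      have ht1 : t ≤ 1 := by
        rw [htdef, show (1:ℝ) = Real.sqrt 1 by rw [Real.sqrt_one]]
        exact Real.sqrt_le_sqrt hσ1
      have ht2 : t ^ 2 = σ := Real.sq_sqrt (le_of_lt hσpos)
      have htwpos : ∀ j : Fin 2, (0:ℝ) < t ^ (![w₁, w₂] j) := fun j => pow_pos htpos _
      set u : Fin 2 → ℝ := fun j => x j / t ^ (![w₁, w₂] j) with hudef
      have hxu : (fun j => t ^ (![w₁, w₂] j) * u j) = x := by
        funext j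
        rw [hudef]
        have hne := ne_of_gt (htwpos j)
        field_simp
      have hu0c : u 0 = x 0 / t ^ w₁ := by rw [hudef]; simp
      have hu1c : u 1 = x 1 / t ^ w₂ := by rw [hudef]; simp
      have hst0 : |u 0| ^ ((2:ℝ)/w₁) = |x 0| ^ ((2:ℝ)/w₁) / σ := by
        rw [hu0c, abs_div, abs_of_pos (pow_pos htpos w₁),
          Real.div_rpow (abs_nonneg _) (le_of_lt (pow_pos htpos w₁))]
        congr 1
        rw [← Real.rpow_natCast t w₁, ← Real.rpow_mul (le_of_lt htpos)]
        rw [show (w₁:ℝ) * ((2:ℝ)/w₁) = 2 by field_simp]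
        rw [show (2:ℝ) = ((2:ℕ):ℝ) by norm_num, Real.rpow_natCast, ht2]
      have hst1 : |u 1| ^ ((2:ℝ)/w₂) = |x 1| ^ ((2:ℝ)/w₂) / σ := by
        rw [hu1c, abs_div, abs_of_pos (pow_pos htpos w₂),
          Real.div_rpow (abs_nonneg _) (le_of_lt (pow_pos htpos w₂))]
        congr 1
        rw [← Real.rpow_natCast t w₂, ← Real.rpow_mul (le_of_lt htpos)]
        rw [show (w₂:ℝ) * ((2:ℝ)/w₂) = 2 by field_simp]
        rw [show (2:ℝ) = ((2:ℕ):ℝ) by norm_num, Real.rpow_natCast, ht2]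
      have huS : u ∈ S := by
        simp only [hSdef, Set.mem_setOf_eq]
        rw [hst0, hst1, ← add_div, ← hσdef, div_self (ne_of_gt hσpos)]
      -- scaling relations
      have hE0x : eval x (pderiv 0 f) = t ^ (d - w₁) * eval u (pderiv 0 f) := by
        rw [← hxu, hscale0]
      have hE1x : eval x (pderiv 1 f) = t ^ (d - w₂) * eval u (pderiv 1 f) := by
        rw [← hxu, hscale1]
      set v : ℝ := |u 1| with hvdef
      have hv0 : 0 ≤ v := abs_nonneg _
      have hv1 : v ≤ 1 := (habs1 u huS).2
      -- gradient lower bounds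
      have hG1 : δ₁ * (t ^ (d - w₁) * v ^ m) ≤ gradNorm f x := by
        have h1 : |eval x (pderiv 0 f)| = t ^ (d - w₁) * (v ^ m * |H u|) := by
          rw [hE0x, abs_mul, abs_of_pos (pow_pos htpos _), hfact u, abs_mul, abs_pow, hvdef]
        have h2 := abs_le_gradNorm f x 0
        rw [h1] at h2
        refine le_trans ?_ h2
        have h3 : δ₁ ≤ |H u| := hδ₁le u huS
        have h4 : (0:ℝ) < t ^ (d - w₁) := pow_pos htpos _
        have h5 : (0:ℝ) ≤ v ^ m := pow_nonneg hv0 m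
        calc δ₁ * (t ^ (d - w₁) * v ^ m) = t ^ (d - w₁) * (v ^ m * δ₁) := by ring
          _ ≤ t ^ (d - w₁) * (v ^ m * |H u|) :=
              mul_le_mul_of_nonneg_left (mul_le_mul_of_nonneg_left h3 h5) (le_of_lt h4)
      have hG2 : v ≤ η → c * t ^ (d - w₂) ≤ gradNorm f x := by
        intro hvη
        have hc2 := hGbound u huS
        have hvc : |u 1| < c := by rw [← hvdef]; rw [hηdef] at hvη; linarith
        have hmax : c ≤ max |eval u (pderiv 0 f)| |eval u (pderiv 1 f)| := by
          rcases le_max_iff.mp hc2 with h | h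
          · linarith
          · exact h
        rcases le_max_iff.mp hmax with h | h
        · have h2 := abs_le_gradNorm f x 0
          rw [hE0x, abs_mul, abs_of_pos (pow_pos htpos (d - w₁))] at h2
          have h4 : (0:ℝ) < t ^ (d - w₁) := pow_pos htpos _
          calc c * t ^ (d - w₂) ≤ c * t ^ (d - w₁) :=
                mul_le_mul_of_nonneg_left (htmono t htpos ht1) (le_of_lt hcpos)
            _ = t ^ (d - w₁) * c := mul_comm _ _
            _ ≤ t ^ (d - w₁) * |eval u (pderiv 0 f)| :=
                mul_le_mul_of_nonneg_left h (le_of_lt h4)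
            _ ≤ gradNorm f x := h2
        · have h2 := abs_le_gradNorm f x 1
          rw [hE1x, abs_mul, abs_of_pos (pow_pos htpos (d - w₂))] at h2
          have h4 : (0:ℝ) < t ^ (d - w₂) := pow_pos htpos _
          calc c * t ^ (d - w₂) = t ^ (d - w₂) * c := mul_comm _ _
            _ ≤ t ^ (d - w₂) * |eval u (pderiv 1 f)| :=
                mul_le_mul_of_nonneg_left h (le_of_lt h4)
            _ ≤ gradNorm f x := h2
      -- upper bound for the norm
      have hx0c : x 0 = t ^ w₁ * u 0 := by
        have h := congrFun hxu 0
        simpa using h.symm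
      have hx1c : x 1 = t ^ w₂ * u 1 := by
        have h := congrFun hxu 1
        simpa using h.symm
      have hxn : eNorm x ≤ t ^ w₁ + t ^ w₂ * v := by
        refine (eNorm_le x).trans ?_
        have h0 : |x 0| ≤ t ^ w₁ := by
          rw [hx0c, abs_mul, abs_of_pos (pow_pos htpos w₁)]
          calc t ^ w₁ * |u 0| ≤ t ^ w₁ * 1 :=
                mul_le_mul_of_nonneg_left (habs1 u huS).1 (le_of_lt (pow_pos htpos w₁))
            _ = t ^ w₁ := mul_one _
        have h1 : |x 1| = t ^ w₂ * v := by
          rw [hx1c, abs_mul, abs_of_pos (pow_pos htpos w₂), hvdef]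
        linarith
      -- rpow estimates
      have hnn : 0 ≤ eNorm x := eNorm_nonneg x
      have htn : (0:ℝ) ≤ t ^ w₁ := le_of_lt (pow_pos htpos w₁)
      have htn2 : (0:ℝ) ≤ t ^ w₂ := le_of_lt (pow_pos htpos w₂)
      have hchain1 : eNorm x ^ lam0 ≤
          2 ^ lam0 * (((t ^ w₁ : ℝ)) ^ lam0 + ((t ^ w₂ * v : ℝ)) ^ lam0) := by
        calc eNorm x ^ lam0 ≤ (t ^ w₁ + t ^ w₂ * v) ^ lam0 :=
              Real.rpow_le_rpow hnn hxn (le_of_lt hlam0pos)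
          _ ≤ _ := rpow_add_le _ _ _ htn (mul_nonneg htn2 hv0) (le_of_lt hlam0pos)
      have hT1 : ((t ^ w₁ : ℝ)) ^ lam0 ≤ t ^ (d - w₂) := by
        rw [← Real.rpow_natCast t w₁, ← Real.rpow_mul (le_of_lt htpos),
          ← Real.rpow_natCast t (d - w₂)]
        apply rpow_le_rpow_exp (le_of_lt htpos) ht1 (Nat.cast_nonneg _)
        rw [Nat.cast_sub hdw₂']
        exact hrw1
      have hT2 : ((t ^ w₂ * v : ℝ)) ^ lam0 ≤ t ^ (d - w₁) * v ^ m := by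
        rw [Real.mul_rpow htn2 hv0]
        apply mul_le_mul _ _ (Real.rpow_nonneg hv0 _) (le_of_lt (pow_pos htpos _))
        · apply le_of_eq
          rw [← Real.rpow_natCast t w₂, ← Real.rpow_mul (le_of_lt htpos), hrw2,
            ← Nat.cast_sub hdw₁, Real.rpow_natCast]
        · rw [← Real.rpow_natCast v m]
          exact rpow_le_rpow_exp hv0 hv1 (Nat.cast_nonneg m) hmlam
      have hgnn := gradNorm_nonneg f x
      have e2 : t ^ (d - w₁) * v ^ m ≤ gradNorm f x / δ₁ := by
        rw [le_div_iff₀ hδ₁pos]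
        linarith only [hG1]
      have hfin : eNorm x ^ lam0 ≤ K0 * gradNorm f x := by
        rcases le_or_gt v η with hvle | hvgt
        · have hB := hG2 hvle
          have e1 : t ^ (d - w₂) ≤ gradNorm f x / c := by
            rw [le_div_iff₀ hcpos]
            linarith only [hB]
          have h7 : eNorm x ^ lam0 ≤
              2 ^ lam0 * (gradNorm f x / c + gradNorm f x / δ₁) := by
            refine hchain1.trans ?_
            apply mul_le_mul_of_nonneg_left _ (le_of_lt h2pos)
            exact add_le_add (hT1.trans e1) (hT2.trans e2)
          have h8 : (0:ℝ) ≤ (1/η ^ m + 1)/δ₁ := le_of_lt (div_pos (by positivity) hδ₁pos)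
          refine h7.trans ?_
          calc 2 ^ lam0 * (gradNorm f x / c + gradNorm f x / δ₁)
              = (2 ^ lam0 * (1/c + 1/δ₁)) * gradNorm f x := by ring
            _ ≤ K0 * gradNorm f x := by
                apply mul_le_mul_of_nonneg_right _ hgnn
                rw [hK0def]
                exact mul_le_mul_of_nonneg_left (le_add_of_nonneg_right h8) (le_of_lt h2pos)
        · have hvm : η ^ m ≤ v ^ m := pow_le_pow_left₀ (le_of_lt hηpos) (le_of_lt hvgt) m
          have e1' : t ^ (d - w₂) ≤ (t ^ (d - w₁) * v ^ m) / η ^ m := by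
            rw [le_div_iff₀ hηm]
            exact mul_le_mul (htmono t htpos ht1) hvm (le_of_lt hηm)
              (le_of_lt (pow_pos htpos _))
          have e1 : t ^ (d - w₂) ≤ (gradNorm f x / δ₁) / η ^ m :=
            e1'.trans ((div_le_div_iff_of_pos_right hηm).mpr e2)
          have h7 : eNorm x ^ lam0 ≤
              2 ^ lam0 * ((gradNorm f x / δ₁) / η ^ m + gradNorm f x / δ₁) := by
            refine hchain1.trans ?_
            apply mul_le_mul_of_nonneg_left _ (le_of_lt h2pos)
            exact add_le_add (hT1.trans e1) (hT2.trans e2)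
          have h8 : (0:ℝ) ≤ 1/c + 1/δ₁ :=
            le_of_lt (add_pos (one_div_pos.mpr hcpos) (one_div_pos.mpr hδ₁pos))
          refine h7.trans ?_
          calc 2 ^ lam0 * ((gradNorm f x / δ₁) / η ^ m + gradNorm f x / δ₁)
              = (2 ^ lam0 * ((1/η ^ m + 1)/δ₁)) * gradNorm f x := by
                field_simp
            _ ≤ K0 * gradNorm f x := by
                apply mul_le_mul_of_nonneg_right _ hgnn
                rw [hK0def]
                exact mul_le_mul_of_nonneg_left (le_add_of_nonneg_left h8) (le_of_lt h2pos)
      calc K0⁻¹ * eNorm x ^ lam0 ≤ K0⁻¹ * (K0 * gradNorm f x) :=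
            mul_le_mul_of_nonneg_left hfin (by positivity)
        _ = gradNorm f x := by field_simp
    have hdw₂ : w₂ ≤ d := le_trans (Nat.le_add_left _ _) hd2
    have hlower : ∀ lam : ℝ, 0 < lam → LojIneq f lam → lam0 ≤ lam := by
      rintro lam hlam ⟨C, hC, U, hU, hb⟩
      by_contra hlt
      push_neg at hlt
      obtain ⟨ε, hε, hball⟩ := Metric.mem_nhds_iff.mp hU
      set c₀ : ℝ := eval ![0, 1] (pderiv 0 f) with hc₀def
      set c₁ : ℝ := eval ![0, 1] (pderiv 1 f) with hc₁def
      set K : ℝ := |c₀| + |c₁| with hKdef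
      have hKnn : 0 ≤ K := by positivity
      have hcur : ∀ y : ℝ, 0 < y → y ≤ 1 → gradNorm f ![0, y] ≤ K * y ^ lam0 := by
        intro y hy hy1
        set t : ℝ := y ^ ((w₂ : ℝ)⁻¹) with htdef
        have htpos : 0 < t := Real.rpow_pos_of_pos hy _
        have htw : t ^ w₂ = y := by
          rw [htdef, ← Real.rpow_natCast (y ^ ((w₂:ℝ)⁻¹)) w₂, ← Real.rpow_mul (le_of_lt hy),
            inv_mul_cancel₀ (ne_of_gt hw₂r), Real.rpow_one]
        have hpt : (fun j => t ^ (![w₁, w₂] j) * (![0, 1] : Fin 2 → ℝ) j) = ![0, y] := by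
          funext j
          fin_cases j <;> simp [htw]
        have hE0 : eval ![0, y] (pderiv 0 f) = t ^ (d - w₁) * c₀ := by
          rw [← hpt, hscale0]
        have hE1 : eval ![0, y] (pderiv 1 f) = t ^ (d - w₂) * c₁ := by
          rw [← hpt, hscale1]
        have htp1 : (t : ℝ) ^ (d - w₁) = y ^ lam0 := by
          rw [← Real.rpow_natCast t (d - w₁), htdef, ← Real.rpow_mul (le_of_lt hy)]
          congr 1
          rw [Nat.cast_sub hdw₁, hlam0def]
          field_simp
        have htp2 : (t : ℝ) ^ (d - w₂) ≤ y ^ lam0 := by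
          rw [← Real.rpow_natCast t (d - w₂), htdef, ← Real.rpow_mul (le_of_lt hy)]
          apply rpow_le_rpow_exp (le_of_lt hy) hy1 (le_of_lt hlam0pos)
          rw [Nat.cast_sub hdw₂, hlam0def, div_le_iff₀ hw₂r]
          have hsimp : ((w₂:ℝ))⁻¹ * ((d:ℝ) - ↑w₂) * ↑w₂ = (d:ℝ) - w₂ := by field_simp
          rw [hsimp]
          linarith
        calc gradNorm f ![0, y]
            ≤ |eval ![0, y] (pderiv 0 f)| + |eval ![0, y] (pderiv 1 f)| :=
              gradNorm_le f _
          _ = t ^ (d - w₁) * |c₀| + t ^ (d - w₂) * |c₁| := by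
              rw [hE0, hE1, abs_mul, abs_mul, abs_pow, abs_pow,
                abs_of_pos htpos]
          _ ≤ y ^ lam0 * |c₀| + y ^ lam0 * |c₁| := by
              apply add_le_add
              · rw [htp1]
              · exact mul_le_mul_of_nonneg_right htp2 (abs_nonneg _)
          _ = K * y ^ lam0 := by rw [hKdef]; ring
      have heN : ∀ y : ℝ, 0 ≤ y → eNorm ![0, y] = y := by
        intro y hy
        rw [eNorm, Fin.sum_univ_two]
        norm_num
        exact Real.sqrt_sq hy
      have hmem : ∀ y : ℝ, 0 < y → y < ε → (![0, y] : Fin 2 → ℝ) ∈ U := by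
        intro y hy hyε
        apply hball
        rw [Metric.mem_ball, dist_pi_lt_iff hε]
        intro j
        fin_cases j <;> simp [Real.dist_eq, abs_of_pos hy, hyε, hε]
      have hmain : ∀ y : ℝ, 0 < y → y ≤ 1 → y < ε → C * y ^ lam ≤ K * y ^ lam0 := by
        intro y hy hy1 hyε
        have h1 := hb _ (hmem y hy hyε)
        rw [heN y (le_of_lt hy)] at h1
        exact h1.trans (hcur y hy hy1)
      rcases eq_or_lt_of_le hKnn with hK0 | hKpos
      · set y₀ : ℝ := min (ε/2) 1 with hy₀def
        have hy₀pos : 0 < y₀ := lt_min (by linarith) one_pos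
        have h := hmain y₀ hy₀pos (min_le_right _ _)
          (lt_of_le_of_lt (min_le_left _ _) (by linarith))
        rw [← hK0, zero_mul] at h
        have h8 : 0 < C * y₀ ^ lam := mul_pos hC (Real.rpow_pos_of_pos hy₀pos lam)
        linarith
      · set ep : ℝ := lam0 - lam with hepdef
        have hep : 0 < ep := by rw [hepdef]; linarith
        set Y : ℝ := (C / (2 * K)) ^ (1 / ep) with hYdef
        have hYpos : 0 < Y := Real.rpow_pos_of_pos (by positivity) _
        set y : ℝ := min (min (ε/2) 1) Y with hydef
        have hypos : 0 < y := lt_min (lt_min (by linarith) one_pos) hYpos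
        have hy1 : y ≤ 1 := le_trans (min_le_left _ _) (min_le_right _ _)
        have hyε : y < ε := lt_of_le_of_lt (le_trans (min_le_left _ _) (min_le_left _ _))
          (by linarith)
        have hyY : y ≤ Y := min_le_right _ _
        have h1 := hmain y hypos hy1 hyε
        have h2 : y ^ lam0 = y ^ ep * y ^ lam := by
          rw [← Real.rpow_add hypos]
          congr 1
          rw [hepdef]; ring
        rw [h2, ← mul_assoc] at h1
        have h3 : C ≤ K * y ^ ep :=
          le_of_mul_le_mul_right h1 (Real.rpow_pos_of_pos hypos lam)
        have h4 : y ^ ep ≤ C / (2 * K) := by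
          calc y ^ ep ≤ Y ^ ep := Real.rpow_le_rpow (le_of_lt hypos) hyY (le_of_lt hep)
            _ = C / (2 * K) := by
                rw [hYdef, ← Real.rpow_mul (by positivity : (0:ℝ) ≤ C / (2 * K)),
                  one_div, inv_mul_cancel₀ (ne_of_gt hep), Real.rpow_one]
        have h5 : K * y ^ ep ≤ K * (C / (2 * K)) :=
          mul_le_mul_of_nonneg_left h4 hKnn
        have h6 : K * (C / (2 * K)) = C / 2 := by
          field_simp
        have h7 : C ≤ C / 2 := h3.trans (h5.trans_eq h6)
        linarith
    -- conclusion
    rw [lojExp]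
    apply le_antisymm
    · exact csInf_le ⟨lam0, fun x hx => hlower x hx.1 hx.2⟩ ⟨hlam0pos, hupper⟩
    · exact le_csInf ⟨lam0, hlam0pos, hupper⟩ fun x hx => hlower x hx.1 hx.2
end

section
/- Let f : ℝ² → ℝ be a non-degenerate weighted homogeneous polynomial of type (d; w₁, w₂) with w₁ ≥ w₂, and suppose that in every neighborhood of the origin there exists a point (a₁, a₂) with a₂ ≠ 0 and ∂f/∂x₁(a₁, a₂) = 0. Then the Łojasiewicz exponent of f equals L(f) = d/w₂ − 1. -/
open MvPolynomial

lemma pderiv_scale {n : ℕ} (w : Fin n → ℕ) (d : ℕ) (f : MvPolynomial (Fin n) ℝ)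
    (hhom : ∀ α ∈ f.support, ∑ i, α i * w i = d) (i : Fin n) (t : ℝ) (x : Fin n → ℝ) :
    t ^ w i * eval (fun j => t ^ w j * x j) (pderiv i f) = t ^ d * eval x (pderiv i f) := by
  conv_lhs => rw [← support_sum_monomial_coeff f]
  conv_rhs => rw [← support_sum_monomial_coeff f]
  simp only [map_sum]
  rw [Finset.mul_sum, Finset.mul_sum]
  refine Finset.sum_congr rfl fun α hα => ?_
  rw [pderiv_monomial, eval_monomial, eval_monomial, Finsupp.prod_pow, Finsupp.prod_pow]
  rcases Nat.eq_zero_or_pos (α i) with h0 | hpos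
  · simp [h0]
  · set β := α - Finsupp.single i 1 with hβ
    have hβj : ∀ j, β j = α j - (if i = j then 1 else 0) := by
      intro j; simp [hβ, Finsupp.single_apply]
    have hprod : ∀ j, (t ^ w j * x j) ^ β j = t ^ (w j * β j) * x j ^ β j := by
      intro j; rw [mul_pow, ← pow_mul]
    have hsum : w i + ∑ j, w j * β j = d := by
      rw [← hhom α hα]
      have h1 : ∀ j, j ≠ i → w j * β j = α j * w j := by
        intro j hj; rw [hβj j, if_neg (Ne.symm hj), Nat.sub_zero, mul_comm]
      have h2 : w i + w i * β i = α i * w i := by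
        rw [hβj i, if_pos rfl, add_comm, ← Nat.mul_succ, Nat.succ_eq_add_one, Nat.sub_add_cancel hpos, mul_comm]
      rw [← Finset.sum_erase_add Finset.univ _ (Finset.mem_univ i),
          ← Finset.sum_erase_add Finset.univ (fun j => α j * w j) (Finset.mem_univ i)]
      rw [Finset.sum_congr rfl (fun j hj => h1 j (Finset.ne_of_mem_erase hj))]
      omega
    calc t ^ w i * (coeff α f * α i * ∏ j, (t ^ w j * x j) ^ β j)
        = (t ^ w i * ∏ j, t ^ (w j * β j)) * (coeff α f * α i * ∏ j, x j ^ β j) := by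
          rw [Finset.prod_congr rfl (fun j _ => hprod j), Finset.prod_mul_distrib]; ring
      _ = t ^ d * (coeff α f * α i * ∏ j, x j ^ β j) := by
          rw [Finset.prod_pow_eq_pow_sum, ← pow_add, hsum]

lemma rho_nonneg {n : ℕ} (w : Fin n → ℕ) (x : Fin n → ℝ) : 0 ≤ rho w x := Real.sqrt_nonneg _

lemma rho_term_nonneg {n : ℕ} (w : Fin n → ℕ) (x : Fin n → ℝ) (i : Fin n) :
    0 ≤ |x i| ^ ((2 : ℝ) / (w i : ℝ)) := Real.rpow_nonneg (abs_nonneg _) _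

lemma rho_eq_zero {n : ℕ} (w : Fin n → ℕ) (hw : ∀ i, 0 < w i) (x : Fin n → ℝ)
    (h : rho w x = 0) : x = 0 := by
  have hsum : ∑ i, |x i| ^ ((2 : ℝ) / (w i : ℝ)) = 0 :=
    le_antisymm (Real.sqrt_eq_zero'.mp h) (Finset.sum_nonneg fun i _ => rho_term_nonneg w x i)
  funext i
  have hterm := (Finset.sum_eq_zero_iff_of_nonneg (fun i _ => rho_term_nonneg w x i)).mp hsum i
    (Finset.mem_univ i)
  have h2 : (2 : ℝ) / (w i : ℝ) ≠ 0 := by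
    have : (0:ℝ) < (w i : ℝ) := by exact_mod_cast hw i
    positivity
  have := (Real.rpow_eq_zero (abs_nonneg _) h2).mp hterm
  simpa using this

lemma rho_pos {n : ℕ} (w : Fin n → ℕ) (hw : ∀ i, 0 < w i) (x : Fin n → ℝ) (hx : x ≠ 0) :
    0 < rho w x := by
  rcases lt_or_eq_of_le (rho_nonneg w x) with h | h
  · exact h
  · exact absurd (rho_eq_zero w hw x h.symm) hx

lemma rho_scale {n : ℕ} (w : Fin n → ℕ) (hw : ∀ i, 0 < w i) (t : ℝ) (ht : 0 ≤ t)
    (x : Fin n → ℝ) : rho w (fun i => t ^ w i * x i) = t * rho w x := by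
  unfold rho
  have hterm : ∀ i : Fin n, |t ^ w i * x i| ^ ((2 : ℝ) / (w i : ℝ))
      = t ^ 2 * |x i| ^ ((2 : ℝ) / (w i : ℝ)) := by
    intro i
    have hwne : ((w i : ℝ)) ≠ 0 := by exact_mod_cast (hw i).ne'
    rw [abs_mul, abs_pow, abs_of_nonneg ht,
      Real.mul_rpow (pow_nonneg ht _) (abs_nonneg _)]
    congr 1
    rw [← Real.rpow_natCast t (w i), ← Real.rpow_mul ht, mul_div_cancel₀ 2 hwne,
      ← Real.rpow_natCast t 2]
    norm_num
  rw [Finset.sum_congr rfl (fun i _ => hterm i), ← Finset.mul_sum,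
    Real.sqrt_mul (by positivity), Real.sqrt_sq ht]

lemma global_nondeg {n : ℕ} (w : Fin n → ℕ) (hw : ∀ i, 0 < w i) (d : ℕ)
    (f : MvPolynomial (Fin n) ℝ) (hhom : ∀ α ∈ f.support, ∑ i, α i * w i = d)
    (hnd : Nondeg f) (x : Fin n → ℝ) (hx : ∀ i, eval x (pderiv i f) = 0) : x = 0 := by
  obtain ⟨U, hU, hU0⟩ := hnd
  have hcont : Continuous fun t : ℝ => (fun i => t ^ w i * x i) := by
    apply continuous_pi; intro i; fun_prop
  have h0 : (fun i => (0:ℝ) ^ w i * x i) = (0 : Fin n → ℝ) := by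
    funext i; simp [zero_pow (hw i).ne']
  have hev : ∀ᶠ t : ℝ in nhds 0, (fun i => t ^ w i * x i) ∈ U := by
    have := hcont.tendsto 0
    rw [h0] at this
    exact this.eventually_mem hU
  rw [Metric.eventually_nhds_iff] at hev
  obtain ⟨ε, hε, hball⟩ := hev
  set t := ε / 2 with htdef
  have ht : 0 < t := by positivity
  have htU : (fun i => t ^ w i * x i) ∈ U := by
    apply hball; rw [Real.dist_eq, sub_zero, abs_of_pos ht]; linarith
  have hgrad : ∀ i, eval (fun j => t ^ w j * x j) (pderiv i f) = 0 := by
    intro i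
    have := pderiv_scale w d f hhom i t x
    rw [hx i, mul_zero] at this
    have htw : t ^ w i ≠ 0 := pow_ne_zero _ ht.ne'
    rcases mul_eq_zero.mp this with h | h
    · exact absurd h htw
    · exact h
  have hz := hU0 _ htU hgrad
  funext i
  have hzi : t ^ w i * x i = 0 := by
    have := congrFun hz i
    simpa using this
  have : x i = 0 := by
    rcases mul_eq_zero.mp hzi with h | h
    · exact absurd h (pow_ne_zero _ ht.ne')
    · exact h
  simpa using this

lemma rho_continuous {n : ℕ} (w : Fin n → ℕ) (hw : ∀ i, 0 < w i) : Continuous (rho w) := by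
  apply Real.continuous_sqrt.comp
  apply continuous_finset_sum
  intro i _
  have h2 : (0:ℝ) < 2 / (w i : ℝ) := by
    have : (0:ℝ) < (w i : ℝ) := by exact_mod_cast hw i
    positivity
  have habs : Continuous fun x : Fin n → ℝ => |x i| := (continuous_apply i).abs
  have hr : Continuous fun y : ℝ => y ^ ((2:ℝ) / (w i : ℝ)) := by
    rw [continuous_iff_continuousAt]
    intro y
    exact Real.continuousAt_rpow_const y _ (Or.inr h2.le)
  exact hr.comp habs

lemma rho_zero {n : ℕ} (w : Fin n → ℕ) (hw : ∀ i, 0 < w i) : rho w (0 : Fin n → ℝ) = 0 := by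
  unfold rho
  have h : ∀ i : Fin n, |(0:Fin n → ℝ) i| ^ ((2:ℝ)/(w i:ℝ)) = 0 := by
    intro i
    simp only [Pi.zero_apply, abs_zero]
    apply Real.zero_rpow
    have : (0:ℝ) < (w i : ℝ) := by exact_mod_cast hw i
    positivity
  rw [Finset.sum_congr rfl (fun i _ => h i)]
  simp

lemma wGradNorm_continuous {n : ℕ} (w : Fin n → ℕ) (hw : ∀ i, 0 < w i)
    (f : MvPolynomial (Fin n) ℝ) : Continuous (wGradNorm w f) := by
  apply Real.continuous_sqrt.comp
  apply continuous_finset_sum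
  intro i _
  exact ((rho_continuous w hw).pow _).mul ((pderiv i f).continuous_eval.pow 2)

lemma wGradNorm_scale {n : ℕ} (w : Fin n → ℕ) (hw : ∀ i, 0 < w i) (d : ℕ)
    (f : MvPolynomial (Fin n) ℝ) (hhom : ∀ α ∈ f.support, ∑ i, α i * w i = d)
    (t : ℝ) (ht : 0 < t) (x : Fin n → ℝ) :
    wGradNorm w f (fun i => t ^ w i * x i) = t ^ d * wGradNorm w f x := by
  unfold wGradNorm
  have hterm : ∀ i : Fin n,
      rho w (fun j => t ^ w j * x j) ^ (2 * w i) * eval (fun j => t ^ w j * x j) (pderiv i f) ^ 2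
      = t ^ (2 * d) * (rho w x ^ (2 * w i) * eval x (pderiv i f) ^ 2) := by
    intro i
    rw [rho_scale w hw t ht.le]
    have hb := pderiv_scale w d f hhom i t x
    have htw : t ^ w i ≠ 0 := pow_ne_zero _ ht.ne'
    have hev : eval (fun j => t ^ w j * x j) (pderiv i f) = t ^ d * eval x (pderiv i f) / t ^ w i := by
      field_simp
      linarith [hb]
    rw [hev, mul_pow]
    field_simp
    ring
  rw [Finset.sum_congr rfl (fun i _ => hterm i), ← Finset.mul_sum, Real.sqrt_mul (by positivity),
    mul_comm 2 d, pow_mul, Real.sqrt_sq (by positivity)]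

lemma wGradNorm_ge {n : ℕ} (w : Fin n → ℕ) (hw : ∀ i, 0 < w i) (d : ℕ) (hd : 0 < d)
    (f : MvPolynomial (Fin n) ℝ) (hhom : ∀ α ∈ f.support, ∑ i, α i * w i = d)
    (hnd : Nondeg f) (x₀ : Fin n → ℝ) (hx₀ : rho w x₀ = 1) :
    ∃ m > (0:ℝ), ∀ x : Fin n → ℝ, m * rho w x ^ d ≤ wGradNorm w f x := by
  -- compact sphere
  set S : Set (Fin n → ℝ) := {x | rho w x = 1} with hS
  have hSc : IsClosed S := isClosed_eq (rho_continuous w hw) continuous_const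
  have hSsub : S ⊆ Metric.closedBall 0 1 := by
    intro x hx
    rw [Metric.mem_closedBall, dist_zero_right]
    rw [pi_norm_le_iff_of_nonneg (by norm_num)]
    intro i
    by_contra hgt
    push_neg at hgt
    have h1 : (1:ℝ) < ‖x i‖ := hgt
    have h2 : (0:ℝ) < 2 / (w i : ℝ) := by
      have : (0:ℝ) < (w i : ℝ) := by exact_mod_cast hw i
      positivity
    have h3 : (1:ℝ) < |x i| ^ ((2:ℝ) / (w i : ℝ)) := by
      rw [show ‖x i‖ = |x i| from rfl] at h1
      calc (1:ℝ) = 1 ^ ((2:ℝ)/(w i:ℝ)) := (Real.one_rpow _).symm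
        _ < |x i| ^ ((2:ℝ)/(w i:ℝ)) := by
            exact Real.rpow_lt_rpow (by norm_num) h1 h2
    have h4 : |x i| ^ ((2:ℝ) / (w i : ℝ)) ≤ ∑ j, |x j| ^ ((2:ℝ)/(w j : ℝ)) :=
      Finset.single_le_sum (fun j _ => rho_term_nonneg w x j) (Finset.mem_univ i)
    have h5 : ∑ j, |x j| ^ ((2:ℝ)/(w j : ℝ)) = 1 := by
      have hnn : (0:ℝ) ≤ ∑ j, |x j| ^ ((2:ℝ)/(w j : ℝ)) :=
        Finset.sum_nonneg fun j _ => rho_term_nonneg w x j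
      have hx' : Real.sqrt (∑ j, |x j| ^ ((2:ℝ)/(w j:ℝ))) = 1 := hx
      nlinarith [Real.sq_sqrt hnn]
    linarith
  have hScomp : IsCompact S := (isCompact_closedBall 0 1).of_isClosed_subset hSc hSsub
  have hSne : S.Nonempty := ⟨x₀, hx₀⟩
  obtain ⟨z, hzS, hzmin⟩ := hScomp.exists_isMinOn hSne (wGradNorm_continuous w hw f).continuousOn
  set m := wGradNorm w f z with hm
  have hz0 : z ≠ 0 := by
    intro h; rw [h] at hzS
    have h0 : rho w (0 : Fin n → ℝ) = 0 := rho_zero w hw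
    have : (1:ℝ) = 0 := by rw [← hzS, h0]
    norm_num at this
  have hmpos : 0 < m := by
    rcases lt_or_eq_of_le (Real.sqrt_nonneg _ : (0:ℝ) ≤ m) with h | h
    · exact h
    · exfalso
      have hsum : ∑ i, rho w z ^ (2 * w i) * eval z (pderiv i f) ^ 2 = 0 := by
        have h1 : Real.sqrt (∑ i, rho w z ^ (2 * w i) * eval z (pderiv i f) ^ 2) = 0 := h.symm
        have h2 : (0:ℝ) ≤ ∑ i, rho w z ^ (2 * w i) * eval z (pderiv i f) ^ 2 :=
          Finset.sum_nonneg fun i _ => mul_nonneg (pow_nonneg (rho_nonneg w z) _) (sq_nonneg _)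
        exact le_antisymm (Real.sqrt_eq_zero'.mp h1) h2
      have hzrho : rho w z = 1 := hzS
      have hgrad : ∀ i, eval z (pderiv i f) = 0 := by
        intro i
        have := (Finset.sum_eq_zero_iff_of_nonneg (fun i _ =>
          mul_nonneg (pow_nonneg (rho_nonneg w z) _) (sq_nonneg _))).mp hsum i (Finset.mem_univ i)
        rw [hzrho, one_pow] at this
        simpa using this
      exact hz0 (global_nondeg w hw d f hhom hnd z hgrad)
  refine ⟨m, hmpos, fun x => ?_⟩
  rcases eq_or_ne x 0 with rfl | hx
  · rw [rho_zero w hw, zero_pow hd.ne', mul_zero]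
    exact Real.sqrt_nonneg _
  · set t := rho w x with htd
    have ht : 0 < t := rho_pos w hw x hx
    set u : Fin n → ℝ := fun i => x i / t ^ w i with hu
    have hxu : (fun i => t ^ w i * u i) = x := by
      funext i; rw [hu]; field_simp
    have hru : rho w u = 1 := by
      have := rho_scale w hw t ht.le u
      rw [hxu] at this
      have h1 : t = t * rho w u := this
      field_simp at h1
      tauto
    have huS : u ∈ S := hru
    have := hzmin huS
    calc m * rho w x ^ d = rho w x ^ d * m := by ring
      _ ≤ rho w x ^ d * wGradNorm w f u := by
          apply mul_le_mul_of_nonneg_left this (by positivity)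
      _ = t ^ d * wGradNorm w f u := by rw [htd]
      _ = wGradNorm w f (fun i => t ^ w i * u i) := (wGradNorm_scale w hw d f hhom t ht u).symm
      _ = wGradNorm w f x := by rw [hxu]

lemma eNorm_zero {n : ℕ} : eNorm (0 : Fin n → ℝ) = 0 := by
  unfold eNorm; simp

lemma eNorm_pos {n : ℕ} (x : Fin n → ℝ) (hx : x ≠ 0) : 0 < eNorm x := by
  rcases lt_or_eq_of_le (eNorm_nonneg x) with h | h
  · exact h
  · exfalso
    apply hx
    have hsum : ∑ i, (x i) ^ 2 = 0 :=
      le_antisymm (Real.sqrt_eq_zero'.mp h.symm) (Finset.sum_nonneg fun i _ => sq_nonneg _)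
    funext i
    have := (Finset.sum_eq_zero_iff_of_nonneg (fun i _ => sq_nonneg (x i))).mp hsum i
      (Finset.mem_univ i)
    have := pow_eq_zero_iff (n := 2) (by norm_num) |>.mp this
    simpa using this

lemma rho_one_x0 (w₁ w₂ : ℕ) (hw₁ : 0 < w₁) (hw₂ : 0 < w₂) :
    rho ![w₁, w₂] (![0, 1] : Fin 2 → ℝ) = 1 := by
  unfold rho
  rw [Fin.sum_univ_two]
  have hw₁' : ((w₁:ℝ)) ≠ 0 := by exact_mod_cast hw₁.ne'
  simp only [Matrix.cons_val_zero, Matrix.cons_val_one, Matrix.head_cons, abs_zero, abs_one]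
  rw [Real.zero_rpow (by positivity), Real.one_rpow]
  norm_num

lemma loj_upper (w₁ w₂ k : ℕ) (hw₂ : 0 < w₂) (hw : w₂ ≤ w₁)
    (f : MvPolynomial (Fin 2) ℝ) (hhom : IsWeightedHomog f ![w₁, w₂] (k + w₂))
    (hnd : Nondeg f) :
    ∀ lam : ℝ, 0 < lam → (k : ℝ) / (w₂ : ℝ) ≤ lam → LojIneq f lam := by
  intro lam hlam hlam2
  set w : Fin 2 → ℕ := ![w₁, w₂] with hwdef
  have hw₁ : 0 < w₁ := lt_of_lt_of_le hw₂ hw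
  have hwpos : ∀ i, 0 < w i := by
    intro i; fin_cases i <;> simpa [hwdef]
  have hwle : ∀ i, w₂ ≤ w i := by
    intro i; fin_cases i <;> simp [hwdef, hw]
  have hwle1 : ∀ i, w i ≤ w₁ := by
    intro i; fin_cases i <;> simp [hwdef, hw]
  set d : ℕ := k + w₂ with hddef
  have hd : 0 < d := by omega
  obtain ⟨m, hm, hmin⟩ := wGradNorm_ge w hwpos d hd f hhom hnd ![0,1] (rho_one_x0 w₁ w₂ hw₁ hw₂)
  set e' : ℝ := (k : ℝ) / (w₂ : ℝ) with he'
  have hw₂R : (0:ℝ) < (w₂:ℝ) := by exact_mod_cast hw₂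
  have he'0 : 0 ≤ e' := by positivity
  set δ : ℝ := (1/2) ^ w₁ with hδ
  have hδpos : 0 < δ := by positivity
  have hδhalf : δ ≤ 1/2 := by
    calc δ = (1/2:ℝ) ^ w₁ := rfl
      _ ≤ (1/2:ℝ) ^ 1 := pow_le_pow_of_le_one (by norm_num) (by norm_num) hw₁
      _ = 1/2 := pow_one _
  set C : ℝ := m * ((Real.sqrt 2) ^ e')⁻¹ with hC
  have hs2 : (0:ℝ) < Real.sqrt 2 ^ e' := Real.rpow_pos_of_pos (by positivity) _
  refine ⟨C, by positivity, Metric.ball 0 δ, Metric.ball_mem_nhds 0 hδpos, ?_⟩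
  intro x hxball
  rcases eq_or_ne x 0 with rfl | hx
  · rw [eNorm_zero, Real.zero_rpow hlam.ne', mul_zero]
    exact Real.sqrt_nonneg _
  -- bounds on coordinates
  have hxi : ∀ i, |x i| ≤ δ := by
    intro i
    have h1 : ‖x‖ < δ := by rwa [Metric.mem_ball, dist_zero_right] at hxball
    exact le_trans (norm_le_pi_norm x i) h1.le
  have hxi1 : ∀ i, |x i| ≤ 1 := fun i => le_trans (hxi i) (by linarith)
  -- rho x ≤ 1
  have hterm_half : ∀ i, |x i| ^ ((2:ℝ)/(w i:ℝ)) ≤ 1/2 := by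
    intro i
    have hwiR : (0:ℝ) < (w i : ℝ) := by exact_mod_cast hwpos i
    have h2 : (0:ℝ) < 2 / (w i : ℝ) := by positivity
    calc |x i| ^ ((2:ℝ)/(w i:ℝ)) ≤ δ ^ ((2:ℝ)/(w i:ℝ)) :=
          Real.rpow_le_rpow (abs_nonneg _) (hxi i) h2.le
      _ = ((1:ℝ)/2) ^ ((w₁:ℝ) * (2/(w i:ℝ))) := by
          rw [hδ, ← Real.rpow_natCast (1/2 : ℝ) w₁, ← Real.rpow_mul (by norm_num)]
      _ ≤ ((1:ℝ)/2) ^ (2:ℝ) := by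
          apply Real.rpow_le_rpow_of_exponent_ge (by norm_num) (by norm_num)
          have hh : (w i : ℝ) ≤ (w₁ : ℝ) := by exact_mod_cast hwle1 i
          rw [mul_div_assoc', le_div_iff₀ hwiR]
          nlinarith
      _ ≤ 1/2 := by
          rw [show ((2:ℝ)) = ((2:ℕ):ℝ) by norm_num, Real.rpow_natCast]
          norm_num
  have hrho_sum : ∑ i, |x i| ^ ((2:ℝ)/(w i:ℝ)) ≤ 1 := by
    rw [Fin.sum_univ_two]
    linarith [hterm_half 0, hterm_half 1]
  have hrho1 : rho w x ≤ 1 := by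
    unfold rho
    rw [show (1:ℝ) = Real.sqrt 1 by simp]
    exact Real.sqrt_le_sqrt hrho_sum
  have hrhopos : 0 < rho w x := rho_pos w hwpos x hx
  -- eNorm x ≤ sqrt 2 * rho x ^ w₂
  have hcoord : ∀ i, (x i)^2 ≤ (rho w x ^ w₂)^2 := by
    intro i
    have h1 : |x i| ^ ((2:ℝ)/(w₂:ℝ)) ≤ rho w x ^ 2 := by
      have hA : |x i| ^ ((2:ℝ)/(w i:ℝ)) ≤ rho w x ^ 2 := by
        have := Finset.single_le_sum (f := fun j => |x j| ^ ((2:ℝ)/(w j:ℝ)))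
          (fun j _ => rho_term_nonneg w x j) (Finset.mem_univ i)
        have hsq : rho w x ^ 2 = ∑ j, |x j| ^ ((2:ℝ)/(w j:ℝ)) :=
          Real.sq_sqrt (Finset.sum_nonneg fun j _ => rho_term_nonneg w x j)
        linarith
      rcases eq_or_ne (x i) 0 with h0 | h0
      · rw [h0]; simp only [abs_zero]
        rw [Real.zero_rpow (by positivity)]
        positivity
      · have habs : 0 < |x i| := abs_pos.mpr h0
        have : |x i| ^ ((2:ℝ)/(w₂:ℝ)) ≤ |x i| ^ ((2:ℝ)/(w i:ℝ)) := by
          apply Real.rpow_le_rpow_of_exponent_ge habs (hxi1 i)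
          have hwiR : (0:ℝ) < (w i : ℝ) := by exact_mod_cast hwpos i
          have : (w₂:ℝ) ≤ (w i : ℝ) := by exact_mod_cast hwle i
          rw [div_le_div_iff₀ hwiR hw₂R]
          nlinarith
        linarith
    have h2 : (|x i| ^ ((2:ℝ)/(w₂:ℝ))) ^ w₂ ≤ (rho w x ^ 2) ^ w₂ :=
      pow_le_pow_left₀ (Real.rpow_nonneg (abs_nonneg _) _) h1 w₂
    have h3 : (|x i| ^ ((2:ℝ)/(w₂:ℝ))) ^ w₂ = (x i)^2 := by
      rw [← Real.rpow_natCast (|x i| ^ ((2:ℝ)/(w₂:ℝ))) w₂, ← Real.rpow_mul (abs_nonneg _),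
        div_mul_cancel₀ 2 hw₂R.ne']
      rw [show ((2:ℝ)) = ((2:ℕ):ℝ) by norm_num, Real.rpow_natCast, sq_abs]
    have h4 : (rho w x ^ 2) ^ w₂ = (rho w x ^ w₂)^2 := by
      rw [← pow_mul, ← pow_mul, mul_comm]
    rw [← h3, ← h4]; exact h2
  have heNorm_le : eNorm x ≤ Real.sqrt 2 * rho w x ^ w₂ := by
    unfold eNorm
    rw [Fin.sum_univ_two]
    have := hcoord 0; have := hcoord 1
    calc Real.sqrt ((x 0)^2 + (x 1)^2) ≤ Real.sqrt (2 * (rho w x ^ w₂)^2) := by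
          apply Real.sqrt_le_sqrt; linarith
      _ = Real.sqrt 2 * rho w x ^ w₂ := by
          rw [Real.sqrt_mul (by norm_num), Real.sqrt_sq (by positivity)]
  -- wGradNorm ≤ rho^w₂ * gradNorm
  have hwgrad_le : wGradNorm w f x ≤ rho w x ^ w₂ * gradNorm f x := by
    unfold wGradNorm gradNorm
    have hterm : ∀ i : Fin 2, rho w x ^ (2 * w i) * eval x (pderiv i f) ^ 2
        ≤ rho w x ^ (2 * w₂) * eval x (pderiv i f) ^ 2 := by
      intro i
      apply mul_le_mul_of_nonneg_right _ (sq_nonneg _)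
      exact pow_le_pow_of_le_one (rho_nonneg w x) hrho1 (by have := hwle i; omega)
    calc Real.sqrt (∑ i, rho w x ^ (2 * w i) * eval x (pderiv i f) ^ 2)
        ≤ Real.sqrt (∑ i, rho w x ^ (2 * w₂) * eval x (pderiv i f) ^ 2) := by
          apply Real.sqrt_le_sqrt
          exact Finset.sum_le_sum fun i _ => hterm i
      _ = rho w x ^ w₂ * Real.sqrt (∑ i, eval x (pderiv i f) ^ 2) := by
          rw [← Finset.mul_sum, Real.sqrt_mul (by positivity), mul_comm 2 w₂, pow_mul,
            Real.sqrt_sq (by positivity)]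
  -- m * rho^k ≤ gradNorm
  have hmain : m * rho w x ^ k ≤ gradNorm f x := by
    have h1 : m * rho w x ^ d ≤ rho w x ^ w₂ * gradNorm f x := le_trans (hmin x) hwgrad_le
    have h2 : m * rho w x ^ d = (m * rho w x ^ k) * rho w x ^ w₂ := by
      rw [hddef, pow_add]; ring
    rw [h2] at h1
    have h3 : 0 < rho w x ^ w₂ := by positivity
    calc m * rho w x ^ k = (m * rho w x ^ k) * rho w x ^ w₂ / rho w x ^ w₂ := by field_simp
      _ ≤ rho w x ^ w₂ * gradNorm f x / rho w x ^ w₂ := by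
          exact (div_le_div_iff_of_pos_right h3).mpr h1
      _ = gradNorm f x := by field_simp
  -- eNorm ^ lam ≤ sqrt2^e' * rho^k
  have heN1 : eNorm x ≤ 1 := by
    unfold eNorm
    rw [Fin.sum_univ_two, show (1:ℝ) = Real.sqrt 1 by simp]
    apply Real.sqrt_le_sqrt
    nlinarith [sq_abs (x 0), sq_abs (x 1), hxi 0, hxi 1, hδhalf,
      abs_nonneg (x 0), abs_nonneg (x 1)]
  have heNpos : 0 < eNorm x := eNorm_pos x hx
  have hrpow1 : eNorm x ^ lam ≤ eNorm x ^ e' :=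
    Real.rpow_le_rpow_of_exponent_ge heNpos heN1 hlam2
  have hrpow2 : eNorm x ^ e' ≤ Real.sqrt 2 ^ e' * rho w x ^ k := by
    calc eNorm x ^ e' ≤ (Real.sqrt 2 * rho w x ^ w₂) ^ e' :=
          Real.rpow_le_rpow (eNorm_nonneg x) heNorm_le he'0
      _ = Real.sqrt 2 ^ e' * (rho w x ^ w₂) ^ e' := by
          rw [Real.mul_rpow (Real.sqrt_nonneg 2) (by positivity)]
      _ = Real.sqrt 2 ^ e' * rho w x ^ k := by
          congr 1
          rw [← Real.rpow_natCast (rho w x) w₂, ← Real.rpow_mul (rho_nonneg w x), he',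
            mul_div_cancel₀ _ hw₂R.ne', Real.rpow_natCast]
  calc C * eNorm x ^ lam ≤ C * (Real.sqrt 2 ^ e' * rho w x ^ k) := by
        apply mul_le_mul_of_nonneg_left (le_trans hrpow1 hrpow2) (by positivity)
    _ = m * rho w x ^ k := by
        rw [hC]; field_simp
    _ ≤ gradNorm f x := hmain

lemma loj_lower (w₁ w₂ k : ℕ) (hw₂ : 0 < w₂) (hw : w₂ ≤ w₁)
    (f : MvPolynomial (Fin 2) ℝ) (hhom : IsWeightedHomog f ![w₁, w₂] (k + w₂))
    (hnd : Nondeg f)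
    (hcase : ∀ U ∈ nhds (0 : Fin 2 → ℝ), ∃ a ∈ U, a 1 ≠ 0 ∧ eval a (pderiv 0 f) = 0) :
    ∀ lam : ℝ, 0 < lam → LojIneq f lam → (k : ℝ) / (w₂ : ℝ) ≤ lam := by
  intro lam hlam hLoj
  set w : Fin 2 → ℕ := ![w₁, w₂] with hwdef
  have hw₁ : 0 < w₁ := lt_of_lt_of_le hw₂ hw
  have hwpos : ∀ i, 0 < w i := by
    intro i; fin_cases i <;> simpa [hwdef]
  have hw0 : w 0 = w₁ := rfl
  have hw1 : w 1 = w₂ := rfl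
  set d : ℕ := k + w₂ with hddef
  have hw₂R : (0:ℝ) < (w₂:ℝ) := by exact_mod_cast hw₂
  obtain ⟨a, -, ha1, ha0⟩ := hcase Set.univ Filter.univ_mem
  have hev1 : eval a (pderiv 1 f) ≠ 0 := by
    intro h
    have hz : ∀ i, eval a (pderiv i f) = 0 := by
      intro i; fin_cases i
      · exact ha0
      · exact h
    have := global_nondeg w hwpos d f hhom hnd a hz
    exact ha1 (by rw [this]; rfl)
  obtain ⟨C, hC, U, hU, hineq⟩ := hLoj
  obtain ⟨ε, hε, hball⟩ := Metric.mem_nhds_iff.mp hU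
  set M : ℝ := |a 0| + |a 1| + 1 with hM
  have hMpos : 0 < M := by positivity
  set t₀ : ℝ := min 1 (ε / M) with ht₀
  have ht₀pos : 0 < t₀ := lt_min (by norm_num) (by positivity)
  set ev : ℝ := eval a (pderiv 1 f) with hev
  have hclaim : ∀ t : ℝ, 0 < t → t < t₀ →
      (C * |a 1| ^ lam) * t ^ ((w₂:ℝ) * lam) ≤ |ev| * t ^ ((k:ℕ):ℝ) := by
    intro t ht htlt
    have ht1 : t ≤ 1 := le_trans htlt.le (min_le_left _ _)
    set xt : Fin 2 → ℝ := fun i => t ^ w i * a i with hxt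
    have hmem : xt ∈ U := by
      apply hball
      rw [Metric.mem_ball, dist_zero_right, pi_norm_lt_iff hε]
      intro i
      have h1 : ‖xt i‖ = t ^ w i * |a i| := by
        rw [hxt]; simp only [Real.norm_eq_abs, abs_mul, abs_pow, abs_of_pos ht]
      have h2 : t ^ w i ≤ t := by
        calc t ^ w i ≤ t ^ 1 := pow_le_pow_of_le_one ht.le ht1 (hwpos i)
          _ = t := pow_one t
      have hi01 : i = 0 ∨ i = 1 := by
        fin_cases i
        · exact Or.inl rfl
        · exact Or.inr rfl
      have h3 : |a i| ≤ M := by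
        rw [hM]
        rcases hi01 with rfl | rfl
        · linarith [abs_nonneg (a 1)]
        · linarith [abs_nonneg (a 0)]
      have h4 : t < ε / M := lt_of_lt_of_le htlt (min_le_right _ _)
      calc ‖xt i‖ = t ^ w i * |a i| := h1
        _ ≤ t * M := by
            exact mul_le_mul h2 h3 (abs_nonneg _) ht.le
        _ < (ε / M) * M := by exact mul_lt_mul_of_pos_right h4 hMpos
        _ = ε := by field_simp
    have he0 : eval xt (pderiv 0 f) = 0 := by
      have := pderiv_scale w d f hhom 0 t a
      rw [ha0, mul_zero] at this
      have : t ^ w 0 * eval xt (pderiv 0 f) = 0 := this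
      rcases mul_eq_zero.mp this with h | h
      · exact absurd h (pow_ne_zero _ ht.ne')
      · exact h
    have he1 : eval xt (pderiv 1 f) = t ^ k * ev := by
      have hps := pderiv_scale w d f hhom 1 t a
      have h2 : t ^ w 1 * eval xt (pderiv 1 f) = t ^ w 1 * (t ^ k * ev) := by
        rw [hps, hddef, hw1, pow_add]; ring
      exact mul_left_cancel₀ (pow_ne_zero _ ht.ne') h2
    have hgrad : gradNorm f xt = t ^ k * |ev| := by
      unfold gradNorm
      rw [Fin.sum_univ_two, he0, he1]
      rw [show (0:ℝ)^2 + (t ^ k * ev)^2 = (t^k * |ev|)^2 by rw [mul_pow, mul_pow, sq_abs]; ring]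
      exact Real.sqrt_sq (by positivity)
    have heNlow : t ^ w₂ * |a 1| ≤ eNorm xt := by
      unfold eNorm
      rw [Fin.sum_univ_two]
      have h1 : (t ^ w₂ * |a 1|) ^ 2 = (xt 1) ^ 2 := by
        rw [hxt]; simp only [hw1]
        rw [mul_pow, mul_pow, sq_abs]
      calc t ^ w₂ * |a 1| = Real.sqrt ((t ^ w₂ * |a 1|)^2) :=
            (Real.sqrt_sq (by positivity)).symm
        _ ≤ Real.sqrt ((xt 0)^2 + (xt 1)^2) := by
            apply Real.sqrt_le_sqrt; rw [h1]; nlinarith [sq_nonneg (xt 0)]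
    have hkey := hineq xt hmem
    rw [hgrad] at hkey
    have hrp : (t ^ w₂ * |a 1|) ^ lam ≤ eNorm xt ^ lam :=
      Real.rpow_le_rpow (by positivity) heNlow hlam.le
    have hexp : (t ^ w₂ * |a 1|) ^ lam = t ^ ((w₂:ℝ) * lam) * |a 1| ^ lam := by
      rw [Real.mul_rpow (by positivity) (abs_nonneg _)]
      congr 1
      rw [← Real.rpow_natCast t w₂, ← Real.rpow_mul ht.le]
    calc (C * |a 1| ^ lam) * t ^ ((w₂:ℝ) * lam) = C * ((t ^ w₂ * |a 1|) ^ lam) := by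
          rw [hexp]; ring
      _ ≤ C * eNorm xt ^ lam := by
          apply mul_le_mul_of_nonneg_left hrp hC.le
      _ ≤ t ^ k * |ev| := hkey
      _ = |ev| * t ^ ((k:ℕ):ℝ) := by rw [Real.rpow_natCast]; ring
  -- now conclude
  rw [div_le_iff₀ hw₂R]
  by_contra hcon
  push_neg at hcon
  set δ' : ℝ := (k:ℝ) - (w₂:ℝ) * lam with hδ'
  have hδ'pos : 0 < δ' := by rw [hδ']; nlinarith
  set c₁ : ℝ := C * |a 1| ^ lam with hc₁
  have hc₁pos : 0 < c₁ := by
    apply mul_pos hC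
    exact Real.rpow_pos_of_pos (abs_pos.mpr ha1) _
  set c₂ : ℝ := |ev| with hc₂
  have hc₂pos : 0 < c₂ := abs_pos.mpr hev1
  set z : ℝ := c₁ / (2 * c₂) with hz
  have hzpos : 0 < z := by positivity
  set s : ℝ := min (t₀ / 2) (z ^ (1/δ')) with hs
  have hspos : 0 < s := lt_min (by positivity) (Real.rpow_pos_of_pos hzpos _)
  have hslt : s < t₀ := lt_of_le_of_lt (min_le_left _ _) (by linarith)
  have h1 := hclaim s hspos hslt
  have h2 : s ^ ((k:ℕ):ℝ) = s ^ ((w₂:ℝ) * lam) * s ^ δ' := by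
    rw [← Real.rpow_add hspos]
    congr 1
    rw [hδ']; ring
  rw [h2] at h1
  have h3 : 0 < s ^ ((w₂:ℝ) * lam) := Real.rpow_pos_of_pos hspos _
  have h4 : c₁ ≤ c₂ * s ^ δ' := by
    have := h1
    rw [show c₂ * (s ^ ((w₂:ℝ)*lam) * s ^ δ') = (c₂ * s ^ δ') * s ^ ((w₂:ℝ)*lam) by ring] at this
    exact le_of_mul_le_mul_right this h3
  have h5 : s ^ δ' ≤ z := by
    calc s ^ δ' ≤ (z ^ (1/δ')) ^ δ' :=
          Real.rpow_le_rpow hspos.le (min_le_right _ _) hδ'pos.le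
      _ = z := by
          rw [← Real.rpow_mul hzpos.le, one_div_mul_cancel hδ'pos.ne', Real.rpow_one]
  have : c₁ ≤ c₁ / 2 := by
    calc c₁ ≤ c₂ * s ^ δ' := h4
      _ ≤ c₂ * z := by apply mul_le_mul_of_nonneg_left h5 hc₂pos.le
      _ = c₁ / 2 := by rw [hz]; field_simp
  linarith

lemma f_ne_zero {n : ℕ} (hn : 0 < n) (f : MvPolynomial (Fin n) ℝ) (hnd : Nondeg f) : f ≠ 0 := by
  intro hf
  obtain ⟨U, hU, h⟩ := hnd
  obtain ⟨ε, hε, hball⟩ := Metric.mem_nhds_iff.mp hU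
  set p : Fin n → ℝ := fun _ => ε / 2 with hp
  have hpU : p ∈ U := by
    apply hball
    rw [Metric.mem_ball, dist_zero_right, pi_norm_lt_iff hε]
    intro i
    rw [hp]
    simp only [Real.norm_eq_abs]
    rw [abs_of_pos (by positivity)]
    linarith
  have := h p hpU (by intro i; rw [hf]; simp)
  have := congrFun this ⟨0, hn⟩
  rw [hp] at this
  simp only [Pi.zero_apply] at this
  linarith

theorem stmt2 (d w₁ w₂ : ℕ) (hd : 0 < d) (hw₂ : 0 < w₂) (hw : w₂ ≤ w₁)
    (f : MvPolynomial (Fin 2) ℝ)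
    (hhom : IsWeightedHomog f ![w₁, w₂] d)
    (hnd : Nondeg f)
    (hcase : ∀ U ∈ nhds (0 : Fin 2 → ℝ), ∃ a ∈ U,
      a 1 ≠ 0 ∧ eval a (pderiv 0 f) = 0) :
    lojExp f = (d : ℝ) / w₂ - 1 := by
  have hw₂R : (0:ℝ) < (w₂:ℝ) := by exact_mod_cast hw₂
  -- d ≥ w₂
  have hfne : f ≠ 0 := f_ne_zero (by norm_num) f hnd
  have hdw : w₂ ≤ d := by
    obtain ⟨α, hα⟩ := (MvPolynomial.support_nonempty.mpr hfne)
    have h := hhom α hα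
    rw [Fin.sum_univ_two] at h
    have h0 : (![w₁, w₂] : Fin 2 → ℕ) 0 = w₁ := rfl
    have h1 : (![w₁, w₂] : Fin 2 → ℕ) 1 = w₂ := rfl
    rw [h0, h1] at h
    rcases Nat.eq_zero_or_pos (α 0) with hz0 | hp0
    · rcases Nat.eq_zero_or_pos (α 1) with hz1 | hp1
      · exfalso; rw [hz0, hz1] at h; omega
      · nlinarith
    · nlinarith
  set k : ℕ := d - w₂ with hk
  have hdk : d = k + w₂ := by omega
  have hhom' : IsWeightedHomog f ![w₁, w₂] (k + w₂) := hdk ▸ hhom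
  have hgoal : (d : ℝ) / w₂ - 1 = (k : ℝ) / (w₂ : ℝ) := by
    have : (d:ℝ) = (k:ℝ) + (w₂:ℝ) := by exact_mod_cast congrArg (Nat.cast : ℕ → ℝ) hdk
    rw [this]; field_simp; ring
  rw [hgoal]
  unfold lojExp
  rcases Nat.eq_zero_or_pos k with hk0 | hkpos
  · -- S = Ioi 0
    have hset : {lam : ℝ | 0 < lam ∧ LojIneq f lam} = Set.Ioi 0 := by
      ext lam
      simp only [Set.mem_setOf_eq, Set.mem_Ioi]
      constructor
      · exact fun h => h.1
      · intro h
        refine ⟨h, loj_upper w₁ w₂ k hw₂ hw f hhom' hnd lam h ?_⟩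
        rw [hk0]; simp; positivity
    rw [hset, csInf_Ioi, hk0]
    simp
  · set e' : ℝ := (k : ℝ) / (w₂ : ℝ) with he'
    have he'pos : 0 < e' := by
      have : (0:ℝ) < (k:ℝ) := by exact_mod_cast hkpos
      positivity
    have hmem : e' ∈ {lam : ℝ | 0 < lam ∧ LojIneq f lam} :=
      ⟨he'pos, loj_upper w₁ w₂ k hw₂ hw f hhom' hnd e' he'pos le_rfl⟩
    have hlb : ∀ b ∈ {lam : ℝ | 0 < lam ∧ LojIneq f lam}, e' ≤ b := by
      rintro b ⟨hb1, hb2⟩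
      exact loj_lower w₁ w₂ k hw₂ hw f hhom' hnd hcase b hb1 hb2
    exact le_antisymm (csInf_le ⟨e', hlb⟩ hmem) (le_csInf ⟨e', hmem⟩ hlb)
end

section
/- Let f : ℝ² → ℝ be a non-degenerate homogeneous polynomial of degree m ≥ 2 (that is, weighted homogeneous of type (d; w, w) with m = d/w). Then the Łojasiewicz exponent of f equals L(f) = m − 1. -/
open MvPolynomial

-- scaling of monomial products
lemma prod_smul_pow {n : ℕ} (t : ℝ) (x : Fin n → ℝ) (s : Fin n → ℕ) :
    ∏ j, (t * x j) ^ s j = t ^ (∑ j, s j) * ∏ j, x j ^ s j := by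
  rw [← Finset.prod_pow_eq_pow_sum, ← Finset.prod_mul_distrib]
  exact Finset.prod_congr rfl fun j _ => mul_pow _ _ _

lemma eval_smul_hom {n k : ℕ} (f : MvPolynomial (Fin n) ℝ)
    (hf : ∀ α ∈ f.support, ∑ i, α i = k) (t : ℝ) (x : Fin n → ℝ) :
    eval (t • x) f = t ^ k * eval x f := by
  rw [eval_eq', eval_eq', Finset.mul_sum]
  refine Finset.sum_congr rfl fun α hα => ?_
  have h1 : ∏ j, (t • x) j ^ α j = t ^ k * ∏ j, x j ^ α j := by
    have := prod_smul_pow t x (fun j => α j)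
    simpa [hf α hα] using this
  rw [h1]; ring

lemma eval_pderiv_smul {n m : ℕ} (f : MvPolynomial (Fin n) ℝ)
    (hf : ∀ α ∈ f.support, ∑ i, α i = m) (t : ℝ) (x : Fin n → ℝ) (i : Fin n) :
    eval (t • x) (pderiv i f) = t ^ (m - 1) * eval x (pderiv i f) := by
  conv_lhs => rw [f.as_sum]
  conv_rhs => rw [f.as_sum]
  rw [map_sum, map_sum, map_sum, Finset.mul_sum]
  refine Finset.sum_congr rfl fun α hα => ?_
  rw [pderiv_monomial, eval_monomial, eval_monomial]
  by_cases h : α i = 0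
  · simp [h]
  · rw [Finsupp.prod_fintype _ _ (fun j => pow_zero _),
      Finsupp.prod_fintype _ _ (fun j => pow_zero _)]
    set β : Fin n →₀ ℕ := α - Finsupp.single i 1 with hβdef
    have hs : ∀ j, β j = α j - (if i = j then 1 else 0) := by
      intro j; rw [hβdef, Finsupp.tsub_apply, Finsupp.single_apply]
    have hβ : ∑ j, β j = m - 1 := by
      have h1 : ∑ j, β j = (α i - 1) + ∑ j ∈ Finset.univ.erase i, β j :=
        (Finset.add_sum_erase _ _ (Finset.mem_univ i)).symm.trans (by rw [hs]; simp)
      have h1' : ∑ j ∈ Finset.univ.erase i, β j = ∑ j ∈ Finset.univ.erase i, α j :=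
        Finset.sum_congr rfl fun j hj => by
          rw [hs, if_neg (Finset.ne_of_mem_erase hj).symm, Nat.sub_zero]
      have h2 : α i + ∑ j ∈ Finset.univ.erase i, α j = m := by
        rw [Finset.add_sum_erase _ _ (Finset.mem_univ i)]; exact hf α hα
      have hpos : 1 ≤ α i := Nat.one_le_iff_ne_zero.mpr h
      omega
    have hp : ∏ j, ((t • x) j) ^ β j = t ^ (m - 1) * ∏ j, (x j) ^ β j := by
      have := prod_smul_pow t x (fun j => β j)
      simpa [hβ] using this
    rw [hp]; ring

lemma eNorm_smul {n : ℕ} (t : ℝ) (ht : 0 ≤ t) (x : Fin n → ℝ) :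
    eNorm (t • x) = t * eNorm x := by
  unfold eNorm
  have : ∑ i, ((t • x) i) ^ 2 = t ^ 2 * ∑ i, (x i) ^ 2 := by
    rw [Finset.mul_sum]; exact Finset.sum_congr rfl fun i _ => by
      simp [mul_pow]
  rw [this, Real.sqrt_mul (sq_nonneg t), Real.sqrt_sq ht]

lemma eNorm_eq_zero {n : ℕ} {x : Fin n → ℝ} (h : eNorm x = 0) : x = 0 := by
  have hsum : ∑ i, (x i) ^ 2 = 0 := by
    have := Real.sqrt_eq_zero'.mp h
    have h2 : (0:ℝ) ≤ ∑ i, (x i) ^ 2 := Finset.sum_nonneg fun i _ => sq_nonneg _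
    linarith
  funext i
  have := (Finset.sum_eq_zero_iff_of_nonneg (fun i _ => sq_nonneg (x i))).mp hsum i
    (Finset.mem_univ i)
  exact pow_eq_zero_iff (by norm_num) |>.mp this

lemma gradNorm_smul {n m : ℕ} (f : MvPolynomial (Fin n) ℝ)
    (hf : ∀ α ∈ f.support, ∑ i, α i = m) (t : ℝ) (ht : 0 ≤ t) (x : Fin n → ℝ) :
    gradNorm f (t • x) = t ^ (m - 1) * gradNorm f x := by
  unfold gradNorm
  have : ∑ i, (eval (t • x) (pderiv i f)) ^ 2
      = (t ^ (m-1)) ^ 2 * ∑ i, (eval x (pderiv i f)) ^ 2 := by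
    rw [Finset.mul_sum]
    exact Finset.sum_congr rfl fun i _ => by
      rw [eval_pderiv_smul f hf t x i, mul_pow]
  rw [this, Real.sqrt_mul (sq_nonneg _), Real.sqrt_sq (pow_nonneg ht _)]

lemma gradNorm_eq_zero {n : ℕ} {f : MvPolynomial (Fin n) ℝ} {x : Fin n → ℝ}
    (h : gradNorm f x = 0) : ∀ i, eval x (pderiv i f) = 0 := by
  have hsum : ∑ i, (eval x (pderiv i f)) ^ 2 = 0 := by
    have := Real.sqrt_eq_zero'.mp h
    have h2 : (0:ℝ) ≤ ∑ i, (eval x (pderiv i f)) ^ 2 :=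
      Finset.sum_nonneg fun i _ => sq_nonneg _
    linarith
  intro i
  have := (Finset.sum_eq_zero_iff_of_nonneg
    (fun i _ => sq_nonneg (eval x (pderiv i f)))).mp hsum i (Finset.mem_univ i)
  exact pow_eq_zero_iff (by norm_num) |>.mp this

lemma continuous_gradNorm {n : ℕ} (f : MvPolynomial (Fin n) ℝ) :
    Continuous (gradNorm f) :=
  Real.continuous_sqrt.comp <| continuous_finset_sum _ fun i _ =>
    (MvPolynomial.continuous_eval _).pow 2

lemma continuous_eNorm {n : ℕ} : Continuous (eNorm (n := n)) :=
  Real.continuous_sqrt.comp <| continuous_finset_sum _ fun i _ =>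
    (continuous_apply i).pow 2


lemma grad_pos {n m : ℕ} (f : MvPolynomial (Fin n) ℝ)
    (hf : ∀ α ∈ f.support, ∑ i, α i = m) (hnd : Nondeg f)
    {x : Fin n → ℝ} (hx : x ≠ 0) : 0 < gradNorm f x := by
  rcases (gradNorm_nonneg f x).lt_or_eq with h | h
  · exact h
  exfalso
  have hzero : ∀ i, eval x (pderiv i f) = 0 := gradNorm_eq_zero h.symm
  obtain ⟨U, hU, hU2⟩ := hnd
  have hcont : ContinuousAt (fun t : ℝ => t • x) 0 :=
    (continuous_id.smul continuous_const).continuousAt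
  have hV : (fun t : ℝ => t • x) ⁻¹' U ∈ nhds (0:ℝ) := by
    apply hcont.preimage_mem_nhds; simpa using hU
  obtain ⟨ε, hε, hball⟩ := Metric.mem_nhds_iff.mp hV
  have htmem : (ε/2 : ℝ) ∈ Metric.ball (0:ℝ) ε := by
    rw [Metric.mem_ball, Real.dist_eq, sub_zero, abs_of_pos (half_pos hε)]
    linarith
  have hXU : (ε/2) • x ∈ U := hball htmem
  have hXz : ∀ i, eval ((ε/2) • x) (pderiv i f) = 0 := fun i => by
    rw [eval_pderiv_smul f hf _ x i, hzero i, mul_zero]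
  have := hU2 _ hXU hXz
  rcases smul_eq_zero.mp this with h' | h'
  · exact (half_pos hε).ne' h'
  · exact hx h'


theorem stmt5 (m w : ℕ) (hm : 2 ≤ m) (hw : 0 < w)
    (f : MvPolynomial (Fin 2) ℝ)
    (hhom : IsWeightedHomog f ![w, w] (m * w))
    (hnd : Nondeg f) :
    lojExp f = (m : ℝ) - 1 := by
  unfold lojExp
  -- f is (ordinarily) homogeneous of degree m
  have hf : ∀ α ∈ f.support, ∑ i, α i = m := by
    intro α hα
    have h1 := hhom α hα
    rw [Fin.sum_univ_two] at h1
    simp only [Matrix.cons_val_zero, Matrix.cons_val_one, Matrix.head_cons] at h1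
    have h2 : (α 0 + α 1) * w = m * w := by rw [add_mul]; exact h1
    have h3 : α 0 + α 1 = m := Nat.eq_of_mul_eq_mul_right hw h2
    rw [Fin.sum_univ_two, h3]
  have hm1 : (0:ℝ) < (m:ℝ) - 1 := by
    have : (2:ℝ) ≤ (m:ℝ) := by exact_mod_cast hm
    linarith
  have hm1ne : ((m:ℝ) - 1) ≠ 0 := hm1.ne'
  have hcast : ((m - 1 : ℕ) : ℝ) = (m:ℝ) - 1 := by
    rw [Nat.cast_sub (by omega : 1 ≤ m)]; simp
  -- the base point
  set x₀ : Fin 2 → ℝ := ![1, 0] with hx₀def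
  have hx₀norm : eNorm x₀ = 1 := by
    simp [eNorm, Fin.sum_univ_two, hx₀def]
  have hx₀ne : x₀ ≠ 0 := by
    intro h
    have := congrFun h 0
    simp [hx₀def] at this
  -- the unit sphere
  set S : Set (Fin 2 → ℝ) := {x | eNorm x = 1} with hSdef
  have hSclosed : IsClosed S := isClosed_eq continuous_eNorm continuous_const
  have hSbdd : Bornology.IsBounded S := by
    rw [isBounded_iff_forall_norm_le]
    refine ⟨1, fun x hx => ?_⟩
    rw [pi_norm_le_iff_of_nonneg zero_le_one]
    intro i
    have hsum : ∑ j, (x j) ^ 2 = 1 := by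
      have h1 : Real.sqrt (∑ j, (x j) ^ 2) = 1 := hx
      have h2 : (0:ℝ) ≤ ∑ j, (x j)^2 := Finset.sum_nonneg fun j _ => sq_nonneg _
      nlinarith [Real.sq_sqrt h2]
    have hle : (x i) ^ 2 ≤ 1 := by
      rw [← hsum]
      exact Finset.single_le_sum (fun j _ => sq_nonneg (x j)) (Finset.mem_univ i)
    rw [Real.norm_eq_abs]
    nlinarith [abs_nonneg (x i), sq_abs (x i)]
  have hScompact : IsCompact S := Metric.isCompact_of_isClosed_isBounded hSclosed hSbdd
  have hx₀S : x₀ ∈ S := hx₀norm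
  obtain ⟨z, hzS, hzmin⟩ := hScompact.exists_isMinOn ⟨x₀, hx₀S⟩
    (continuous_gradNorm f).continuousOn
  have hzne : z ≠ 0 := by
    intro h
    rw [h] at hzS
    have : eNorm (0 : Fin 2 → ℝ) = 1 := hzS
    rw [eNorm_zero] at this
    norm_num at this
  have hc : 0 < gradNorm f z := grad_pos f hf hnd hzne
  -- the Łojasiewicz inequality holds with exponent m - 1
  have key : LojIneq f ((m:ℝ) - 1) := by
    refine ⟨gradNorm f z, hc, Set.univ, Filter.univ_mem, fun x _ => ?_⟩
    rcases eq_or_ne x 0 with rfl | hx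
    · rw [eNorm_zero, Real.zero_rpow hm1ne, mul_zero]
      exact gradNorm_nonneg f 0
    · have hrne : eNorm x ≠ 0 := fun h => hx (eNorm_eq_zero h)
      have hr : 0 < eNorm x := (eNorm_nonneg x).lt_of_ne' hrne
      have hu : eNorm ((eNorm x)⁻¹ • x) = 1 := by
        rw [eNorm_smul _ (inv_nonneg.mpr hr.le), inv_mul_cancel₀ hrne]
      have hxr : (eNorm x) • ((eNorm x)⁻¹ • x) = x := by
        rw [smul_smul, mul_inv_cancel₀ hrne, one_smul]
      have hg : gradNorm f x = (eNorm x) ^ (m-1) * gradNorm f ((eNorm x)⁻¹ • x) := by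
        conv_lhs => rw [← hxr]
        exact gradNorm_smul f hf _ hr.le _
      have hmin : gradNorm f z ≤ gradNorm f ((eNorm x)⁻¹ • x) := hzmin hu
      have hrp : (eNorm x) ^ ((m:ℝ)-1) = (eNorm x) ^ (m-1 : ℕ) := by
        rw [← hcast, Real.rpow_natCast]
      calc gradNorm f z * eNorm x ^ ((m:ℝ)-1)
          = gradNorm f z * eNorm x ^ (m-1 : ℕ) := by rw [hrp]
        _ ≤ gradNorm f ((eNorm x)⁻¹ • x) * eNorm x ^ (m-1 : ℕ) :=
            mul_le_mul_of_nonneg_right hmin (pow_nonneg hr.le _)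
        _ = gradNorm f x := by rw [hg]; ring
  -- lower bound: every admissible exponent is at least m - 1
  have lb : ∀ lam ∈ {lam : ℝ | 0 < lam ∧ LojIneq f lam}, (m:ℝ) - 1 ≤ lam := by
    rintro lam ⟨hlam, C, hC, U, hU, hineq⟩
    by_contra hlt
    push_neg at hlt
    have hg0 : 0 < gradNorm f x₀ := grad_pos f hf hnd hx₀ne
    set e : ℝ := (m:ℝ) - 1 - lam with hedef
    have he : 0 < e := by simp [hedef]; linarith
    have hcontr : ContinuousAt (fun t:ℝ => t ^ e) 0 :=
      Real.continuousAt_rpow_const 0 e (Or.inr he.le)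
    have htend : Filter.Tendsto (fun t:ℝ => t ^ e * gradNorm f x₀) (nhds 0) (nhds 0) := by
      have h1 : ContinuousAt (fun t:ℝ => t ^ e * gradNorm f x₀) 0 :=
        hcontr.mul (continuousAt_const (y := gradNorm f x₀))
      have h2 : ((0:ℝ) ^ e) * gradNorm f x₀ = 0 := by
        rw [Real.zero_rpow he.ne', zero_mul]
      simpa [ContinuousAt, h2] using h1
    have hev : ∀ᶠ t in nhds (0:ℝ), t ^ e * gradNorm f x₀ < C :=
      htend.eventually_lt_const hC
    have hV : (fun t : ℝ => t • x₀) ⁻¹' U ∈ nhds (0:ℝ) := by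
      apply (continuous_id.smul continuous_const).continuousAt.preimage_mem_nhds
      simpa using hU
    obtain ⟨ε, hε, hball⟩ := Metric.mem_nhds_iff.mp (Filter.inter_mem hev hV)
    have htmem : (ε/2 : ℝ) ∈ Metric.ball (0:ℝ) ε := by
      rw [Metric.mem_ball, Real.dist_eq, sub_zero, abs_of_pos (half_pos hε)]
      linarith
    obtain ⟨ht1, ht2⟩ := hball htmem
    set t : ℝ := ε/2 with htdef
    have htpos : 0 < t := half_pos hε
    have h1 : C * eNorm (t • x₀) ^ lam ≤ gradNorm f (t • x₀) := hineq _ ht2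
    have h2 : eNorm (t • x₀) = t := by
      rw [eNorm_smul _ htpos.le, hx₀norm, mul_one]
    have h3 : gradNorm f (t • x₀) = t ^ (m-1:ℕ) * gradNorm f x₀ :=
      gradNorm_smul f hf _ htpos.le _
    have h4 : t ^ (m-1:ℕ) = t ^ e * t ^ lam := by
      rw [← Real.rpow_natCast t (m-1), hcast, ← Real.rpow_add htpos]
      congr 1
      simp [hedef]
    have h5 : C * t ^ lam ≤ (t ^ e * gradNorm f x₀) * t ^ lam := by
      rw [h2] at h1
      rw [h3, h4] at h1
      calc C * t ^ lam ≤ t ^ e * t ^ lam * gradNorm f x₀ := h1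
        _ = (t ^ e * gradNorm f x₀) * t ^ lam := by ring
    have h6 : (t ^ e * gradNorm f x₀) * t ^ lam < C * t ^ lam :=
      mul_lt_mul_of_pos_right ht1 (Real.rpow_pos_of_pos htpos lam)
    linarith
  have hne : Set.Nonempty {lam : ℝ | 0 < lam ∧ LojIneq f lam} := ⟨(m:ℝ)-1, hm1, key⟩
  refine le_antisymm (csInf_le ⟨(m:ℝ)-1, lb⟩ ⟨hm1, key⟩) (le_csInf hne lb)
end
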